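/- arXiv:1105.0477 — 9 statements merged into one kernel-verified Lean document; each statement's English description precedes it below -/
import Mathlib

section
/- Let k be a natural number, G a finite simple graph, A, B ⊆ V(G) disjoint sets of vertices, and v_0 a vertex of G such that: (A1) |A| ≥ k and |B| ≥ R_k; (A2) A is a clique in G; (A3) {u, v_0} is an edge for every u ∈ A, and {v, v_0} is not an edge for any v ∈ B; (A4) {u, v} is an edge for every u ∈ A and v ∈ B. Then G contains a k-edge induced subgraph. -/
/-- `G` contains a `k`-edge induced subgraph: there is a nonempty set `S` of vertices
such that the number of edges of `G` with both endpoints in `S` is exactly `k`. -/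
def HasKEdgeInducedSubgraph {V : Type*} (G : SimpleGraph V) (k : ℕ) : Prop :=
  ∃ S : Finset V, S.Nonempty ∧ {e ∈ G.edgeSet | ∀ v ∈ e, v ∈ S}.ncard = k

/-- The Ramsey number `R_k`: the least `N` such that every finite simple graph on at least `N`
vertices contains a clique of size `k` or an independent set of size `k`. -/
noncomputable def ramseyNumber (k : ℕ) : ℕ :=
  sInf {N : ℕ | ∀ (V : Type) (inst : Fintype V) (G : SimpleGraph V),
    N ≤ @Fintype.card V inst →
    (∃ S : Finset V, S.card = k ∧ ∀ u ∈ S, ∀ w ∈ S, u ≠ w → G.Adj u w) ∨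
    (∃ S : Finset V, S.card = k ∧ ∀ u ∈ S, ∀ w ∈ S, u ≠ w → ¬ G.Adj u w)}


open Finset

lemma edgecount_eq {V : Type*} (G : SimpleGraph V) [DecidableEq V] [DecidableRel G.Adj]
    (S : Finset V) :
    {e ∈ G.edgeSet | ∀ v ∈ e, v ∈ S}.ncard =
      (S.sym2.filter (fun e => e ∈ G.edgeSet)).card := by
  rw [← Set.ncard_coe_finset]
  congr 1
  ext e
  simp only [Set.mem_setOf_eq, Finset.coe_filter, Finset.mem_sym2_iff]
  tauto

lemma edgecount_insert {V : Type*} [DecidableEq V] (G : SimpleGraph V)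
    [DecidableRel G.Adj] (T : Finset V) (v0 : V) (hv0 : v0 ∉ T) :
    ((insert v0 T).sym2.filter (fun e => e ∈ G.edgeSet)).card =
      (T.sym2.filter (fun e => e ∈ G.edgeSet)).card + (T.filter (G.Adj v0)).card := by
  have hset : (insert v0 T).sym2.filter (fun e => e ∈ G.edgeSet) =
      (T.sym2.filter (fun e => e ∈ G.edgeSet)) ∪
        (T.filter (G.Adj v0)).image (fun a => s(v0, a)) := by
    ext e
    induction e with
    | _ a b =>
      simp only [Finset.mem_filter, Finset.mem_union, Finset.mem_image,
        Finset.mk_mem_sym2_iff, Finset.mem_insert, SimpleGraph.mem_edgeSet]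
      constructor
      · rintro ⟨⟨ha, hb⟩, hadj⟩
        rcases ha with rfl | ha
        · rcases hb with rfl | hb
          · exact absurd hadj (G.irrefl)
          · exact Or.inr ⟨b, ⟨hb, hadj⟩, Sym2.eq_iff.2 (Or.inl ⟨rfl, rfl⟩)⟩
        · rcases hb with rfl | hb
          · exact Or.inr ⟨a, ⟨ha, hadj.symm⟩,
              Sym2.eq_iff.2 (Or.inr ⟨rfl, rfl⟩)⟩
          · exact Or.inl ⟨⟨ha, hb⟩, hadj⟩
      · rintro (⟨⟨ha, hb⟩, hadj⟩ | ⟨c, hc, hce⟩)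
        · exact ⟨⟨Or.inr ha, Or.inr hb⟩, hadj⟩
        · rcases Sym2.eq_iff.1 hce with ⟨h1, h2⟩ | ⟨h1, h2⟩
        

          · exact ⟨⟨Or.inl h1.symm, Or.inr (h2 ▸ hc.1)⟩, h1 ▸ h2 ▸ hc.2⟩
          · exact ⟨⟨Or.inr (h2 ▸ hc.1), Or.inl h1.symm⟩, h1 ▸ h2 ▸ hc.2.symm⟩
  rw [hset, Finset.card_union_of_disjoint, Finset.card_image_of_injOn]
  · intro a ha b hb hab
    rcases Sym2.eq_iff.1 hab with ⟨_, h⟩ | ⟨h1, h2⟩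
    · exact h
    · exact absurd (h1 ▸ (Finset.mem_filter.1 hb).1) hv0
  · rw [Finset.disjoint_left]
    rintro e he hi
    obtain ⟨c, hc, rfl⟩ := Finset.mem_image.1 hi
    have := Finset.mem_sym2_iff.1 (Finset.mem_filter.1 he).1 v0 (by simp)
    exact hv0 this

lemma edgecount_clique {V : Type*} [DecidableEq V] (G : SimpleGraph V)
    [DecidableRel G.Adj] (T : Finset V)
    (h : ∀ u ∈ T, ∀ w ∈ T, u ≠ w → G.Adj u w) :
    (T.sym2.filter (fun e => e ∈ G.edgeSet)).card = T.card.choose 2 := by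
  induction T using Finset.cons_induction with
  | empty => simp
  | cons a T ha ih =>
    rw [Finset.cons_eq_insert, edgecount_insert G T a ha,
      ih (fun u hu w hw huw => h u (by simp [hu]) w (by simp [hw]) huw)]
    have : T.filter (G.Adj a) = T := by
      apply Finset.filter_true_of_mem
      intro x hx
      exact h a (by simp) x (by simp [hx]) (fun e => ha (e ▸ hx))
    rw [this, Finset.card_insert_of_notMem ha]
    simp [Nat.choose_succ_succ]
    omega

lemma edgecount_indep {V : Type*} [DecidableEq V] (G : SimpleGraph V)
    [DecidableRel G.Adj] (T : Finset V)
    (h : ∀ u ∈ T, ∀ w ∈ T, u ≠ w → ¬ G.Adj u w) :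
    (T.sym2.filter (fun e => e ∈ G.edgeSet)).card = 0 := by
  rw [Finset.card_eq_zero, Finset.filter_eq_empty_iff]
  intro e he
  induction e with
  | _ a b =>
    rw [Finset.mk_mem_sym2_iff] at he
    simp only [SimpleGraph.mem_edgeSet]
    intro hadj
    exact h a he.1 b he.2 (G.ne_of_adj hadj) hadj


lemma ramsey_exists (s t : ℕ) : ∃ N : ℕ,
    ∀ (V : Type) (inst : Fintype V) (G : SimpleGraph V),
      N ≤ @Fintype.card V inst →
      (∃ S : Finset V, S.card = s ∧ ∀ u ∈ S, ∀ w ∈ S, u ≠ w → G.Adj u w) ∨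
      (∃ S : Finset V, S.card = t ∧ ∀ u ∈ S, ∀ w ∈ S, u ≠ w → ¬ G.Adj u w) := by
  induction s generalizing t with
  | zero => exact ⟨0, fun V inst G _ => Or.inl ⟨∅, by simp, by simp⟩⟩
  | succ s ihs =>
    induction t with
    | zero => exact ⟨0, fun V inst G _ => Or.inr ⟨∅, by simp, by simp⟩⟩
    | succ t iht =>
      obtain ⟨N1, h1⟩ := ihs (t + 1)
      obtain ⟨N2, h2⟩ := iht
      refine ⟨N1 + N2 + 1, ?_⟩
      intro V inst G hcard
      classical
      have hne : Nonempty V := by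
        rw [← Fintype.card_pos_iff]; omega
      obtain ⟨v⟩ := hne
      set nb : Finset V := G.neighborFinset v with hnb
      set mb : Finset V := (Finset.univ \ insert v nb) with hmb
      have hvnb : v ∉ nb := by simp [hnb]
      have hcards : nb.card + mb.card + 1 = Fintype.card V := by
        have hsub : insert v nb ⊆ Finset.univ := Finset.subset_univ _
        have := Finset.card_sdiff_of_subset hsub
        rw [hmb, this, Finset.card_insert_of_notMem hvnb, Finset.card_univ]
        have : nb.card + 1 ≤ Fintype.card V := by
          rw [← Finset.card_insert_of_notMem hvnb, ← Finset.card_univ]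
          exact Finset.card_le_card hsub
        omega
      have hcase : N1 ≤ nb.card ∨ N2 ≤ mb.card := by omega
      rcases hcase with hc | hc
      · -- neighbors
        let W := {x // x ∈ nb}
        let G' : SimpleGraph W := G.comap Subtype.val
        have hcW : N1 ≤ Fintype.card W := by rwa [Fintype.card_coe]
        rcases h1 W _ G' hcW with ⟨S', hS'c, hS'⟩ | ⟨S', hS'c, hS'⟩
        · -- clique of size s in neighbors; add v
          refine Or.inl ⟨insert v (S'.image Subtype.val), ?_, ?_⟩
          · rw [Finset.card_insert_of_notMem, Finset.card_image_of_injective _ Subtype.val_injective, hS'c]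
            intro hv
            obtain ⟨x, _, hx⟩ := Finset.mem_image.1 hv
            exact hvnb (hx ▸ x.2)
          · intro a ha b hb hab
            rcases Finset.mem_insert.1 ha with rfl | ha
            · obtain ⟨x, _, rfl⟩ := Finset.mem_image.1 (Finset.mem_insert.1 hb |>.resolve_left (Ne.symm hab))
              exact (G.mem_neighborFinset _ x).1 x.2
            · obtain ⟨x, hxS, rfl⟩ := Finset.mem_image.1 ha
              rcases Finset.mem_insert.1 hb with rfl | hb
              · exact ((G.mem_neighborFinset b x).1 x.2).symm
              · obtain ⟨y, hyS, rfl⟩ := Finset.mem_image.1 hb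
                exact hS' x hxS y hyS (fun e => hab (congrArg Subtype.val e))
        · -- independent set of size t+1
          refine Or.inr ⟨S'.image Subtype.val, ?_, ?_⟩
          · rw [Finset.card_image_of_injective _ Subtype.val_injective, hS'c]
          · intro a ha b hb hab
            obtain ⟨x, hxS, rfl⟩ := Finset.mem_image.1 ha
            obtain ⟨y, hyS, rfl⟩ := Finset.mem_image.1 hb
            exact hS' x hxS y hyS (fun e => hab (congrArg Subtype.val e))
      · -- non-neighbors
        let W := {x // x ∈ mb}
        let G' : SimpleGraph W := G.comap Subtype.val
        have hcW : N2 ≤ Fintype.card W := by rwa [Fintype.card_coe]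
        have hmbprop : ∀ x ∈ mb, ¬ G.Adj v x ∧ x ≠ v := by
          intro x hx
          rw [hmb, Finset.mem_sdiff, Finset.mem_insert] at hx
          push_neg at hx
          exact ⟨fun h => hx.2.2 ((G.mem_neighborFinset v x).2 h), hx.2.1⟩
        rcases h2 W _ G' hcW with ⟨S', hS'c, hS'⟩ | ⟨S', hS'c, hS'⟩
        · -- clique of size s+1
          refine Or.inl ⟨S'.image Subtype.val, ?_, ?_⟩
          · rw [Finset.card_image_of_injective _ Subtype.val_injective, hS'c]
          · intro a ha b hb hab
            obtain ⟨x, hxS, rfl⟩ := Finset.mem_image.1 ha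
            obtain ⟨y, hyS, rfl⟩ := Finset.mem_image.1 hb
            exact hS' x hxS y hyS (fun e => hab (congrArg Subtype.val e))
        · -- independent of size t in non-neighbors; add v
          refine Or.inr ⟨insert v (S'.image Subtype.val), ?_, ?_⟩
          · rw [Finset.card_insert_of_notMem, Finset.card_image_of_injective _ Subtype.val_injective, hS'c]
            intro hv
            obtain ⟨x, _, hx⟩ := Finset.mem_image.1 hv
            exact (hmbprop x x.2).2 hx
          · intro a ha b hb hab hadj
            rcases Finset.mem_insert.1 ha with rfl | ha
            · obtain ⟨x, _, rfl⟩ := Finset.mem_image.1 (Finset.mem_insert.1 hb |>.resolve_left (Ne.symm hab))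
              exact (hmbprop x x.2).1 hadj
            · obtain ⟨x, hxS, rfl⟩ := Finset.mem_image.1 ha
              rcases Finset.mem_insert.1 hb with rfl | hb
              · exact (hmbprop x x.2).1 hadj.symm
              · obtain ⟨y, hyS, rfl⟩ := Finset.mem_image.1 hb
                exact hS' x hxS y hyS (fun e => hab (congrArg Subtype.val e)) hadj

theorem apex_structure {V : Type*} [Fintype V] (G : SimpleGraph V) (k : ℕ)
    (A B : Finset V) (v0 : V)
    (hdisj : Disjoint A B)
    (hAcard : k ≤ A.card) (hBcard : ramseyNumber k ≤ B.card)
    (hAclique : ∀ u ∈ A, ∀ w ∈ A, u ≠ w → G.Adj u w)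
    (hA3a : ∀ u ∈ A, G.Adj u v0)
    (hA3b : ∀ w ∈ B, ¬ G.Adj w v0)
    (hA4 : ∀ u ∈ A, ∀ w ∈ B, G.Adj u w) :
    HasKEdgeInducedSubgraph G k := by
  classical
  unfold HasKEdgeInducedSubgraph
  rcases Nat.eq_zero_or_pos k with rfl | hk
  · refine ⟨{v0}, ⟨v0, by simp⟩, ?_⟩
    rw [edgecount_eq]
    exact edgecount_indep G {v0} (by
      intro u hu w hw huw
      simp only [Finset.mem_singleton] at hu hw
      exact absurd (hu.trans hw.symm) huw)
  -- pick a ∈ A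
  obtain ⟨a, haA⟩ := Finset.card_pos.1 (lt_of_lt_of_le hk hAcard)
  -- Ramsey: B contains a clique or independent set of size k
  obtain ⟨N, hN⟩ := ramsey_exists k k
  have hmem := Nat.sInf_mem (s := {N : ℕ | ∀ (V : Type) (inst : Fintype V) (G : SimpleGraph V),
      N ≤ @Fintype.card V inst →
      (∃ S : Finset V, S.card = k ∧ ∀ u ∈ S, ∀ w ∈ S, u ≠ w → G.Adj u w) ∨
      (∃ S : Finset V, S.card = k ∧ ∀ u ∈ S, ∀ w ∈ S, u ≠ w → ¬ G.Adj u w)})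
      ⟨N, hN⟩
  set f : Fin B.card → V := fun i => ((B.equivFin.symm i : ↥B) : V) with hf
  have hfinj : Function.Injective f :=
    fun i j h => B.equivFin.symm.injective (Subtype.ext h)
  have hfB : ∀ i, f i ∈ B := fun i => (B.equivFin.symm i).2
  have hcard : ramseyNumber k ≤ Fintype.card (Fin B.card) := by
    rwa [Fintype.card_fin]
  rcases hmem (Fin B.card) inferInstance (G.comap f) hcard with
    ⟨S₀, hS₀c, hS₀⟩ | ⟨S₀, hS₀c, hS₀⟩
  · -- clique C ⊆ B of size k
    set C : Finset V := S₀.image f with hC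
    have hCB : C ⊆ B := by
      intro x hx; obtain ⟨i, _, rfl⟩ := Finset.mem_image.1 hx; exact hfB i
    have hCc : C.card = k := by
      rw [hC, Finset.card_image_of_injective _ hfinj, hS₀c]
    have hCclique : ∀ u ∈ C, ∀ w ∈ C, u ≠ w → G.Adj u w := by
      intro u hu w hw huw
      obtain ⟨i, hi, rfl⟩ := Finset.mem_image.1 hu
      obtain ⟨j, hj, rfl⟩ := Finset.mem_image.1 hw
      exact hS₀ i hi j hj (fun e => huw (e ▸ rfl))
    have hv0A : v0 ∉ A := fun h => G.irrefl (hA3a v0 h)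
    rcases eq_or_lt_of_le (show 1 ≤ k from hk) with hk1 | hk2
    · -- k = 1 : use {v0, a}
      have hv0a : v0 ∉ ({a} : Finset V) := by
        simp only [Finset.mem_singleton]
        exact fun h => G.irrefl (h ▸ hA3a a haA)
      refine ⟨insert v0 {a}, ⟨v0, by simp⟩, ?_⟩
      rw [edgecount_eq, edgecount_insert G _ v0 hv0a]
      have h1 : ({a} : Finset V).filter (G.Adj v0) = {a} := by
        apply Finset.filter_true_of_mem
        intro x hx
        simp only [Finset.mem_singleton] at hx
        exact (hA3a x (hx ▸ haA)).symm
      rw [h1, edgecount_indep G {a} (by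
        intro u hu w hw huw
        simp only [Finset.mem_singleton] at hu hw
        exact absurd (hu.trans hw.symm) huw)]
      simp [← hk1]
    · -- k ≥ 2
      have hv0C : v0 ∉ C := by
        intro hv0C
        obtain ⟨c, hcC, hcv0⟩ := Finset.exists_mem_ne (hCc ▸ hk2) v0
        exact hA3b c (hCB hcC) (hCclique c hcC v0 hv0C hcv0)
      set m : ℕ := Nat.findGreatest (fun m => m.choose 2 ≤ k) k with hm
      have hm2 : 2 ≤ m := Nat.le_findGreatest (P := fun m => m.choose 2 ≤ k)
        (by omega) (by simp only [Nat.choose_self]; omega)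
      have hmk : m ≤ k := Nat.findGreatest_le k
      have hchoose : m.choose 2 ≤ k := hm ▸
        Nat.findGreatest_spec (P := fun m => m.choose 2 ≤ k) (m := 2)
          (by omega) (by simp only [Nat.choose_self]; omega)
      set r : ℕ := k - m.choose 2 with hr
      have hrm : r < m := by
        rcases eq_or_lt_of_le hmk with he | hlt
        · have h1 : 1 ≤ m.choose 2 := Nat.choose_pos (by omega)
          omega
        · have hgt : ¬ (m + 1).choose 2 ≤ k :=
            Nat.findGreatest_is_greatest (P := fun m => m.choose 2 ≤ k) (n := k)
              (k := m + 1) (by omega) (by omega)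
          have h2 : (m + 1).choose 2 = m.choose 2 + m := by
            rw [Nat.choose_succ_succ, Nat.choose_one_right]
            norm_num
            omega
          omega
      rcases Nat.eq_zero_or_pos r with hr0 | hr1
      · -- r = 0 : take E ⊆ C with card m
        obtain ⟨E, hEC, hEc⟩ := Finset.exists_subset_card_eq (s := C) (n := m) (by omega)
        refine ⟨E, Finset.card_pos.1 (by omega), ?_⟩
        rw [edgecount_eq, edgecount_clique G E
          (fun u hu w hw huw => hCclique u (hEC hu) w (hEC hw) huw), hEc]
        omega
      · -- r ≥ 1 : take D ⊆ A card r, E ⊆ C card m - r, S = insert v0 (D ∪ E)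
        obtain ⟨D, hDA, hDc⟩ := Finset.exists_subset_card_eq (s := A) (n := r) (by omega)
        obtain ⟨E, hEC, hEc⟩ := Finset.exists_subset_card_eq (s := C) (n := m - r) (by omega)
        have hEB : E ⊆ B := hEC.trans hCB
        have hDE : Disjoint D E := hdisj.mono hDA hEB
        have hTclique : ∀ u ∈ D ∪ E, ∀ w ∈ D ∪ E, u ≠ w → G.Adj u w := by
          intro u hu w hw huw
          rcases Finset.mem_union.1 hu with hu | hu <;>
            rcases Finset.mem_union.1 hw with hw | hw
          · exact hAclique u (hDA hu) w (hDA hw) huw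
          · exact hA4 u (hDA hu) w (hEB hw)
          · exact (hA4 w (hDA hw) u (hEB hu)).symm
          · exact hCclique u (hEC hu) w (hEC hw) huw
        have hv0T : v0 ∉ D ∪ E := by
          rw [Finset.mem_union]
          rintro (h | h)
          · exact hv0A (hDA h)
          · exact hv0C (hEC h)
        have hfilter : (D ∪ E).filter (G.Adj v0) = D := by
          ext x
          simp only [Finset.mem_filter, Finset.mem_union]
          constructor
          · rintro ⟨hD | hE, hadj⟩
            · exact hD
            · exact absurd hadj.symm (hA3b x (hEB hE))
          · intro hD
            exact ⟨Or.inl hD, (hA3a x (hDA hD)).symm⟩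
        refine ⟨insert v0 (D ∪ E), ⟨v0, Finset.mem_insert_self _ _⟩, ?_⟩
        rw [edgecount_eq, edgecount_insert G _ v0 hv0T, edgecount_clique G _ hTclique,
          hfilter, Finset.card_union_of_disjoint hDE, hDc, hEc]
        have : r + (m - r) = m := by omega
        rw [this]
        omega
  · -- independent set I ⊆ B of size k : S = insert a I
    set I : Finset V := S₀.image f with hI
    have hIB : I ⊆ B := by
      intro x hx; obtain ⟨i, _, rfl⟩ := Finset.mem_image.1 hx; exact hfB i
    have hIc : I.card = k := by
      rw [hI, Finset.card_image_of_injective _ hfinj, hS₀c]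
    have hIind : ∀ u ∈ I, ∀ w ∈ I, u ≠ w → ¬ G.Adj u w := by
      intro u hu w hw huw
      obtain ⟨i, hi, rfl⟩ := Finset.mem_image.1 hu
      obtain ⟨j, hj, rfl⟩ := Finset.mem_image.1 hw
      exact hS₀ i hi j hj (fun e => huw (e ▸ rfl))
    have haI : a ∉ I := fun h => Finset.disjoint_left.1 hdisj haA (hIB h)
    refine ⟨insert a I, ⟨a, Finset.mem_insert_self _ _⟩, ?_⟩
    rw [edgecount_eq, edgecount_insert G I a haI, edgecount_indep G I hIind,
      Finset.filter_true_of_mem (fun x hx => hA4 a haA x (hIB hx)), hIc]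
    omega
end

section
/- (Gauss's Eureka theorem) For every natural number k there exist natural numbers k_0, k_1, k_2 such that k = k_0(k_0−1)/2 + k_1(k_1−1)/2 + k_2(k_2−1)/2, i.e., every natural number is the sum of three triangular numbers. -/
set_option maxHeartbeats 1600000

open scoped NumberTheorySymbols

namespace EurekaAux

def QF (a b c r s t x y z : ℤ) : ℤ :=
  a*x^2 + b*y^2 + c*z^2 + 2*r*y*z + 2*s*x*z + 2*t*x*y

def PD (a b c r s t : ℤ) : Prop :=
  ∀ x y z : ℤ, ¬(x = 0 ∧ y = 0 ∧ z = 0) → 0 < QF a b c r s t x y z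

def SOS (a b c r s t : ℤ) : Prop :=
  ∃ p₁ p₂ p₃ q₁ q₂ q₃ w₁ w₂ w₃ : ℤ, ∀ x y z : ℤ,
    QF a b c r s t x y z =
      (p₁*x + p₂*y + p₃*z)^2 + (q₁*x + q₂*y + q₃*z)^2 + (w₁*x + w₂*y + w₃*z)^2

theorem SOS.of_subst {a b c r s t a' b' c' r' s' t' : ℤ}
    (n₁₁ n₁₂ n₁₃ n₂₁ n₂₂ n₂₃ n₃₁ n₃₂ n₃₃ : ℤ)
    (h : ∀ x y z : ℤ, QF a b c r s t x y z =
      QF a' b' c' r' s' t' (n₁₁*x + n₁₂*y + n₁₃*z) (n₂₁*x + n₂₂*y + n₂₃*z) (n₃₁*x + n₃₂*y + n₃₃*z))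
    (hS : SOS a' b' c' r' s' t') : SOS a b c r s t := by
  obtain ⟨p₁, p₂, p₃, q₁, q₂, q₃, w₁, w₂, w₃, hpq⟩ := hS
  refine ⟨p₁*n₁₁ + p₂*n₂₁ + p₃*n₃₁, p₁*n₁₂ + p₂*n₂₂ + p₃*n₃₂, p₁*n₁₃ + p₂*n₂₃ + p₃*n₃₃,
         q₁*n₁₁ + q₂*n₂₁ + q₃*n₃₁, q₁*n₁₂ + q₂*n₂₂ + q₃*n₃₂, q₁*n₁₃ + q₂*n₂₃ + q₃*n₃₃,
         w₁*n₁₁ + w₂*n₂₁ + w₃*n₃₁, w₁*n₁₂ + w₂*n₂₂ + w₃*n₃₂, w₁*n₁₃ + w₂*n₂₃ + w₃*n₃₃,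
         fun x y z => ?_⟩
  rw [h x y z, hpq]
  ring

theorem PD.diag {a b c r s t : ℤ} (h : PD a b c r s t) : 0 < a ∧ 0 < b ∧ 0 < c := by
  refine ⟨?_, ?_, ?_⟩
  · have := h 1 0 0 (by simp); norm_num [QF] at this; exact this
  · have := h 0 1 0 (by simp); norm_num [QF] at this; exact this
  · have := h 0 0 1 (by simp); norm_num [QF] at this; exact this

/-- shear step: if |2t| > a, we can decrease b -/
theorem shear {N : ℕ}
    (ih : ∀ a b c r s t : ℤ, PD a b c r s t →
      a*b*c + 2*r*s*t - a*r^2 - b*s^2 - c*t^2 = 1 → a + b + c ≤ (N:ℤ) → SOS a b c r s t)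
    (a b c r s t : ℤ) (hPD : PD a b c r s t)
    (hdet : a*b*c + 2*r*s*t - a*r^2 - b*s^2 - c*t^2 = 1)
    (hsum : a + b + c ≤ (N:ℤ) + 1)
    (hviol : a < 2*t ∨ 2*t < -a) : SOS a b c r s t := by
  obtain ⟨ha, hb, hc⟩ := hPD.diag
  set k : ℤ := (2*t + a) / (2*a) with hk
  have h2a : (0:ℤ) < 2*a := by linarith
  have hmod0 : 0 ≤ (2*t + a) % (2*a) := Int.emod_nonneg _ (by linarith)
  have hmodlt : (2*t + a) % (2*a) < 2*a := Int.emod_lt_of_pos _ h2a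
  have hdiv : 2*a * k + (2*t + a) % (2*a) = 2*t + a := Int.mul_ediv_add_emod _ _
  have htp1 : -a ≤ 2*(t - a*k) := by linarith
  have htp2 : 2*(t - a*k) < a := by linarith
  have hsub : ∀ x y z : ℤ, QF a (b + a*k^2 - 2*t*k) c (r - s*k) s (t - a*k) x y z
      = QF a b c r s t (x - k*y) y z := by intro x y z; unfold QF; ring
  have hPD' : PD a (b + a*k^2 - 2*t*k) c (r - s*k) s (t - a*k) := by
    intro x y z hxyz
    rw [hsub]
    apply hPD
    rintro ⟨h1, rfl, rfl⟩
    exact hxyz ⟨by simpa using h1, rfl, rfl⟩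
  have hBlt : b + a*k^2 - 2*t*k < b := by
    rcases hviol with hv | hv
    · have hk1 : 1 ≤ k := by nlinarith
      nlinarith [mul_le_mul hk1 (by nlinarith : (1:ℤ) ≤ 4*t - 2*a*k) (by norm_num) (by linarith)]
    · have hk1 : k ≤ -1 := by nlinarith
      nlinarith [mul_le_mul (by linarith : (1:ℤ) ≤ -k) (by nlinarith : (1:ℤ) ≤ -(4*t - 2*a*k))
        (by norm_num) (by linarith)]
  have hB1 : 0 < b + a*k^2 - 2*t*k := (hPD'.diag).2.1
  have hdet' : a*(b + a*k^2 - 2*t*k)*c + 2*(r - s*k)*s*(t - a*k) - a*(r - s*k)^2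
      - (b + a*k^2 - 2*t*k)*s^2 - c*(t - a*k)^2 = 1 := by linear_combination hdet
  have hS := ih a (b + a*k^2 - 2*t*k) c (r - s*k) s (t - a*k) hPD' hdet' (by linarith)
  exact SOS.of_subst 1 k 0 0 1 0 0 0 1 (by intro x y z; unfold QF; ring) hS

private theorem step1 (a b c r s t : ℤ) (ha2 : 2 ≤ a) (hab : a ≤ b) (hbc : b + 1 ≤ c)
    (ht1 : 2*t ≤ a) (ht2 : -a ≤ 2*t) (hs1 : 2*s ≤ a) (hs2 : -a ≤ 2*s)
    (hr1 : 2*r ≤ b) (hr2 : -b ≤ 2*r)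
    (hdet : a*b*c + 2*r*s*t - a*r^2 - b*s^2 - c*t^2 = 1) : False := by
  have idA : (a*b - t^2) * (a*c - s^2) = a + (a*r - s*t)^2 := by linear_combination a*hdet
  have h1 : 3*(a*b) ≤ 4*(a*b - t^2) := by
    nlinarith [sq_nonneg t, mul_le_mul_of_nonneg_left hab (by linarith : (0:ℤ) ≤ a)]
  have h2 : 3*(a*c) ≤ 4*(a*c - s^2) := by nlinarith [sq_nonneg s]
  have hab0 : (0:ℤ) < a*b := mul_pos (by linarith) (by linarith)
  have hac0 : (0:ℤ) < a*c := mul_pos (by linarith) (by linarith)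
  have h3 : 9*(a^2*b*c) ≤ 16*((a*b - t^2)*(a*c - s^2)) := by
    have := mul_le_mul h1 h2 (by linarith) (by linarith)
    nlinarith [this]
  have hw1 : 4*(a*r - s*t) ≤ 3*(a*b) := by
    nlinarith [mul_nonneg (by linarith : (0:ℤ) ≤ a) (by linarith : (0:ℤ) ≤ b - 2*r),
      sq_nonneg (s+t), sq_nonneg (s-t)]
  have hw2 : -(3*(a*b)) ≤ 4*(a*r - s*t) := by
    nlinarith [mul_nonneg (by linarith : (0:ℤ) ≤ a) (by linarith : (0:ℤ) ≤ b + 2*r),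
      sq_nonneg (s+t), sq_nonneg (s-t)]
  have h4 : 16*(a*r - s*t)^2 ≤ 9*(a^2*b^2) := by nlinarith [sq_le_sq' hw2 hw1]
  nlinarith [h3, h4, idA, hab0]

private theorem step2 (a b r s t : ℤ) (ha2 : 2 ≤ a) (hab : a + 1 ≤ b)
    (ht1 : 2*t ≤ a) (ht2 : -a ≤ 2*t) (hs1 : 2*s ≤ a) (hs2 : -a ≤ 2*s)
    (hr1 : 2*r ≤ b) (hr2 : -b ≤ 2*r)
    (hdet : a*b*b + 2*r*s*t - a*r^2 - b*s^2 - b*t^2 = 1) : False := by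
  have idC : (a*b - s^2) * (b*b - r^2) = b + (b*t - r*s)^2 := by linear_combination b*hdet
  have h2 : 3*(a*b) ≤ 4*(a*b - s^2) := by
    nlinarith [sq_nonneg s, mul_le_mul_of_nonneg_left (by linarith : a ≤ b) (by linarith : (0:ℤ) ≤ a)]
  have h5 : 3*(b*b) ≤ 4*(b*b - r^2) := by nlinarith [sq_nonneg r]
  have hab0 : (0:ℤ) < a*b := mul_pos (by linarith) (by linarith)
  have hbb0 : (0:ℤ) < b*b := mul_pos (by linarith) (by linarith)
  have h6 : 9*(a*b*b*b) ≤ 16*((a*b - s^2)*(b*b - r^2)) := by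
    have := mul_le_mul h2 h5 (by linarith) (by linarith)
    nlinarith [this]
  have hv1 : 4*(b*t - r*s) ≤ 3*(a*b) := by
    nlinarith [mul_nonneg (by linarith : (0:ℤ) ≤ b) (by linarith : (0:ℤ) ≤ a - 2*t),
      mul_nonneg (by linarith : (0:ℤ) ≤ b - 2*r) (by linarith : (0:ℤ) ≤ a - 2*s),
      mul_nonneg (by linarith : (0:ℤ) ≤ b + 2*r) (by linarith : (0:ℤ) ≤ a + 2*s)]
  have hv2 : -(3*(a*b)) ≤ 4*(b*t - r*s) := by
    nlinarith [mul_nonneg (by linarith : (0:ℤ) ≤ b) (by linarith : (0:ℤ) ≤ a + 2*t),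
      mul_nonneg (by linarith : (0:ℤ) ≤ b - 2*r) (by linarith : (0:ℤ) ≤ a + 2*s),
      mul_nonneg (by linarith : (0:ℤ) ≤ b + 2*r) (by linarith : (0:ℤ) ≤ a - 2*s)]
  have h7 : 16*(b*t - r*s)^2 ≤ 9*(a^2*b^2) := by nlinarith [sq_le_sq' hv2 hv1]
  nlinarith [h6, h7, idC, hab0]

private theorem step3 (a r s t : ℤ) (ha3 : 3 ≤ a)
    (ht1 : 2*t ≤ a - 1) (ht2 : -(a-1) ≤ 2*t) (hs1 : 2*s ≤ a-1) (hs2 : -(a-1) ≤ 2*s)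
    (hr1 : 2*r ≤ a-1) (hr2 : -(a-1) ≤ 2*r)
    (hdet : a*a*a + 2*r*s*t - a*r^2 - a*s^2 - a*t^2 = 1) : False := by
  have idA : (a*a - t^2) * (a*a - s^2) = a + (a*r - s*t)^2 := by linear_combination a*hdet
  have h1 : (a+1)*(3*a-1) ≤ 4*(a*a - t^2) := by nlinarith [sq_nonneg t]
  have h2 : (a+1)*(3*a-1) ≤ 4*(a*a - s^2) := by nlinarith [sq_nonneg s]
  have h3 : (a+1)^2*(3*a-1)^2 ≤ 16*((a*a - t^2)*(a*a - s^2)) := by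
    have := mul_le_mul h1 h2 (by nlinarith) (by nlinarith)
    nlinarith [this]
  have hw1 : 4*(a*r - s*t) ≤ (a-1)*(3*a-1) := by
    nlinarith [mul_nonneg (by linarith : (0:ℤ) ≤ a) (by linarith : (0:ℤ) ≤ (a-1) - 2*r),
      sq_nonneg (s+t), sq_nonneg (s-t)]
  have hw2 : -((a-1)*(3*a-1)) ≤ 4*(a*r - s*t) := by
    nlinarith [mul_nonneg (by linarith : (0:ℤ) ≤ a) (by linarith : (0:ℤ) ≤ (a-1) + 2*r),
      sq_nonneg (s+t), sq_nonneg (s-t)]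
  have h4 : 16*(a*r - s*t)^2 ≤ (a-1)^2*(3*a-1)^2 := by nlinarith [sq_le_sq' hw2 hw1]
  nlinarith [h3, h4, idA]

theorem classify_sorted (a b c r s t : ℤ) (ha : 1 ≤ a) (hab : a ≤ b) (hbc : b ≤ c)
    (ht1 : 2*t ≤ a) (ht2 : -a ≤ 2*t) (hs1 : 2*s ≤ a) (hs2 : -a ≤ 2*s)
    (hr1 : 2*r ≤ b) (hr2 : -b ≤ 2*r)
    (hdet : a*b*c + 2*r*s*t - a*r^2 - b*s^2 - c*t^2 = 1) :
    a = 1 ∧ b = 1 ∧ c = 1 ∧ r = 0 ∧ s = 0 ∧ t = 0 := by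
  by_cases ha2 : 2 ≤ a
  · exfalso
    have hcb : c = b := by
      by_contra hne
      exact step1 a b c r s t ha2 hab (by omega) ht1 ht2 hs1 hs2 hr1 hr2 hdet
    have hba : b = a := by
      by_contra hne
      exact step2 a b r s t ha2 (by omega) ht1 ht2 hs1 hs2 hr1 hr2
        (by linear_combination hdet - congrArg (fun x => a*b*x - x*t^2) hcb)
    have hdet' : a*a*a + 2*r*s*t - a*r^2 - a*s^2 - a*t^2 = 1 := by
      rw [hcb, hba] at hdet; linear_combination hdet
    have hodd : a % 2 = 1 := by
      rcases Int.even_or_odd a with ⟨w, hw⟩ | ⟨w, hw⟩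
      · exfalso
        have h2 : (2:ℤ) ∣ 1 := by
          rw [← hdet']
          exact ⟨4*w^3 + r*s*t - w*r^2 - w*s^2 - w*t^2, by subst hw; ring⟩
        norm_num at h2
      · omega
    have hra : 2*r ≤ a ∧ -a ≤ 2*r := by constructor <;> omega
    refine step3 a r s t (by omega) (by omega) (by omega) (by omega) (by omega)
      (by omega) (by omega) hdet'
  · have ha1 : a = 1 := by omega
    subst ha1
    have ht0 : t = 0 := by omega
    have hs0 : s = 0 := by omega
    subst ht0; subst hs0
    have hb1 : b = 1 := by nlinarith [sq_nonneg r]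
    subst hb1
    have hr0 : r = 0 := by omega
    subst hr0
    refine ⟨rfl, rfl, by linarith [hdet], rfl, rfl, rfl⟩

/-- unsorted classification -/
theorem classify (a b c r s t : ℤ) (ha : 1 ≤ a) (hb : 1 ≤ b) (hc : 1 ≤ c)
    (hT1 : 2*t ≤ a) (hT2 : -a ≤ 2*t) (hT3 : 2*t ≤ b) (hT4 : -b ≤ 2*t)
    (hS1 : 2*s ≤ a) (hS2 : -a ≤ 2*s) (hS3 : 2*s ≤ c) (hS4 : -c ≤ 2*s)
    (hR1 : 2*r ≤ b) (hR2 : -b ≤ 2*r) (hR3 : 2*r ≤ c) (hR4 : -c ≤ 2*r)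
    (hdet : a*b*c + 2*r*s*t - a*r^2 - b*s^2 - c*t^2 = 1) :
    a = 1 ∧ b = 1 ∧ c = 1 ∧ r = 0 ∧ s = 0 ∧ t = 0 := by
  rcases le_total a b with h1 | h1
  · rcases le_total b c with h2 | h2
    · -- a ≤ b ≤ c
      exact classify_sorted a b c r s t ha h1 h2 hT1 hT2 hS1 hS2 hR1 hR2 hdet
    · rcases le_total a c with h3 | h3
      · -- a ≤ c ≤ b
        obtain ⟨e1,e2,e3,e4,e5,e6⟩ := classify_sorted a c b r t s ha h3 h2 hS1 hS2 hT1 hT2 hR3 hR4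
          (by linear_combination hdet)
        exact ⟨e1,e3,e2,e4,e6,e5⟩
      · -- c ≤ a ≤ b
        obtain ⟨e1,e2,e3,e4,e5,e6⟩ := classify_sorted c a b t r s hc h3 h1 hS3 hS4 hR3 hR4 hT1 hT2
          (by linear_combination hdet)
        exact ⟨e2,e3,e1,e5,e6,e4⟩
  · rcases le_total b c with h2 | h2
    · rcases le_total a c with h3 | h3
      · -- b ≤ a ≤ c
        obtain ⟨e1,e2,e3,e4,e5,e6⟩ := classify_sorted b a c s r t hb h1 h3 hT3 hT4 hR1 hR2 hS1 hS2
          (by linear_combination hdet)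
        exact ⟨e2,e1,e3,e5,e4,e6⟩
      · -- b ≤ c ≤ a
        obtain ⟨e1,e2,e3,e4,e5,e6⟩ := classify_sorted b c a s t r hb h2 h3 hR1 hR2 hT3 hT4 hS3 hS4
          (by linear_combination hdet)
        exact ⟨e3,e1,e2,e6,e4,e5⟩
    · -- c ≤ b ≤ a
      obtain ⟨e1,e2,e3,e4,e5,e6⟩ := classify_sorted c b a t s r hc h2 h1 hR3 hR4 hS3 hS4 hT3 hT4
        (by linear_combination hdet)
      exact ⟨e3,e2,e1,e6,e5,e4⟩

theorem descent : ∀ (N : ℕ) (a b c r s t : ℤ), PD a b c r s t →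
    a*b*c + 2*r*s*t - a*r^2 - b*s^2 - c*t^2 = 1 → a + b + c ≤ (N:ℤ) → SOS a b c r s t := by
  intro N
  induction N with
  | zero =>
    intro a b c r s t hPD hdet hsum
    obtain ⟨ha, hb, hc⟩ := hPD.diag
    exfalso
    norm_num at hsum
    linarith
  | succ N ih =>
    intro a b c r s t hPD hdet hsum
    obtain ⟨ha, hb, hc⟩ := hPD.diag
    push_cast at hsum
    by_cases v1 : a < 2*t ∨ 2*t < -a
    · exact shear ih a b c r s t hPD hdet hsum v1
    by_cases v2 : b < 2*t ∨ 2*t < -b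
    · have hPD' : PD b a c s r t := by
        intro x y z h
        have e : QF b a c s r t x y z = QF a b c r s t y x z := by unfold QF; ring
        rw [e]; exact hPD y x z (by tauto)
      have hS : SOS b a c s r t :=
        shear ih b a c s r t hPD' (by linear_combination hdet) (by linarith) v2
      exact SOS.of_subst 0 1 0 1 0 0 0 0 1 (by intro x y z; unfold QF; ring) hS
    by_cases v3 : a < 2*s ∨ 2*s < -a
    · have hPD' : PD a c b r t s := by
        intro x y z h
        have e : QF a c b r t s x y z = QF a b c r s t x z y := by unfold QF; ring
        rw [e]; exact hPD x z y (by tauto)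
      have hS : SOS a c b r t s :=
        shear ih a c b r t s hPD' (by linear_combination hdet) (by linarith) v3
      exact SOS.of_subst 1 0 0 0 0 1 0 1 0 (by intro x y z; unfold QF; ring) hS
    by_cases v4 : c < 2*s ∨ 2*s < -c
    · have hPD' : PD c a b t r s := by
        intro x y z h
        have e : QF c a b t r s x y z = QF a b c r s t y z x := by unfold QF; ring
        rw [e]; exact hPD y z x (by tauto)
      have hS : SOS c a b t r s :=
        shear ih c a b t r s hPD' (by linear_combination hdet) (by linarith) v4
      exact SOS.of_subst 0 0 1 1 0 0 0 1 0 (by intro x y z; unfold QF; ring) hS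
    by_cases v5 : b < 2*r ∨ 2*r < -b
    · have hPD' : PD b c a s t r := by
        intro x y z h
        have e : QF b c a s t r x y z = QF a b c r s t z x y := by unfold QF; ring
        rw [e]; exact hPD z x y (by tauto)
      have hS : SOS b c a s t r :=
        shear ih b c a s t r hPD' (by linear_combination hdet) (by linarith) v5
      exact SOS.of_subst 0 1 0 0 0 1 1 0 0 (by intro x y z; unfold QF; ring) hS
    by_cases v6 : c < 2*r ∨ 2*r < -c
    · have hPD' : PD c b a t s r := by
        intro x y z h
        have e : QF c b a t s r x y z = QF a b c r s t z y x := by unfold QF; ring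
        rw [e]; exact hPD z y x (by tauto)
      have hS : SOS c b a t s r :=
        shear ih c b a t s r hPD' (by linear_combination hdet) (by linarith) v6
      exact SOS.of_subst 0 0 1 0 1 0 1 0 0 (by intro x y z; unfold QF; ring) hS
    push_neg at v1 v2 v3 v4 v5 v6
    obtain ⟨e1, e2, e3, e4, e5, e6⟩ := classify a b c r s t (by linarith) (by linarith) (by linarith)
      v1.1 (by linarith [v1.2]) v2.1 (by linarith [v2.2])
      v3.1 (by linarith [v3.2]) v4.1 (by linarith [v4.2])
      v5.1 (by linarith [v5.2]) v6.1 (by linarith [v6.2]) hdet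
    subst e1; subst e2; subst e3; subst e4; subst e5; subst e6
    exact ⟨1,0,0,0,1,0,0,0,1, by intro x y z; unfold QF; ring⟩

private theorem pd_aux (n a₀ qz u : ℤ) (hn3 : 3 ≤ n) (hD2 : 2 ≤ n*a₀ - 1)
    (key : ∀ x y z : ℤ, (n*a₀-1) * (n * QF n a₀ qz u 0 1 x y z) =
      (n*a₀-1)*(n*x + y)^2 + ((n*a₀-1)*y + n*u*z)^2 + n*z^2) :
    PD n a₀ qz u 0 1 := by
  intro x y z hxyz
  by_contra hcon
  push_neg at hcon
  have hnQ : n * QF n a₀ qz u 0 1 x y z ≤ 0 :=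
    mul_nonpos_of_nonneg_of_nonpos (by linarith) hcon
  have hDQ : (n*a₀-1) * (n * QF n a₀ qz u 0 1 x y z) ≤ 0 :=
    mul_nonpos_of_nonneg_of_nonpos (by linarith) hnQ
  rw [key x y z] at hDQ
  have e1 : 0 ≤ (n*a₀-1)*(n*x + y)^2 := mul_nonneg (by linarith) (sq_nonneg _)
  have e2 : 0 ≤ ((n*a₀-1)*y + n*u*z)^2 := sq_nonneg _
  have e3 : 0 ≤ n*z^2 := mul_nonneg (by linarith) (sq_nonneg _)
  have hC : n*z^2 = 0 := le_antisymm (by linarith) e3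
  have hz : z = 0 := by
    rcases mul_eq_zero.mp hC with h | h
    · linarith
    · exact pow_eq_zero_iff (by norm_num) |>.mp h
  subst hz
  have hB : ((n*a₀-1)*y + n*u*0)^2 = 0 := le_antisymm (by linarith) e2
  have hB' : (n*a₀-1)*y + n*u*0 = 0 := pow_eq_zero_iff (by norm_num) |>.mp hB
  have hy : y = 0 := by
    have h4 : (n*a₀-1)*y = 0 := by linarith [hB']
    rcases mul_eq_zero.mp h4 with h5 | h5
    · linarith
    · exact h5
  subst hy
  have hA : (n*a₀-1)*(n*x + 0)^2 = 0 := le_antisymm (by linarith) e1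
  have hA' : (n*x + 0)^2 = 0 := by
    rcases mul_eq_zero.mp hA with h | h
    · linarith
    · exact h
  have hx : x = 0 := by
    have h5 : n*x + 0 = 0 := pow_eq_zero_iff (by norm_num) |>.mp hA'
    have h6 : n*x = 0 := by linarith
    rcases mul_eq_zero.mp h6 with h7 | h7
    · linarith
    · exact h7
  exact hxyz ⟨hx, rfl, rfl⟩

theorem three_squares (k : ℕ) : ∃ x y z : ℤ, (8*(k:ℤ)+3) = x^2 + y^2 + z^2 := by
  obtain ⟨n, hn⟩ : ∃ n : ℕ, n = 8*k+3 := ⟨_, rfl⟩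
  haveI : NeZero (4*n) := ⟨by omega⟩
  have hcop : Nat.Coprime (4*k+1) (4*n) := by
    have h4 : Nat.Coprime (4*k+1) 4 :=
      Nat.Coprime.symm (by simpa using (Nat.coprime_mul_left_add_right 4 1 k))
    have hnn : Nat.Coprime (4*k+1) n := by
      have he : n = (4*k+1)*2 + 1 := by omega
      rw [he, Nat.coprime_comm]
      simpa using (Nat.coprime_mul_left_add_right (4*k+1) 1 2)
    exact Nat.Coprime.mul_right h4 hnn
  have hunit : IsUnit ((4*k+1 : ℕ) : ZMod (4*n)) := (ZMod.isUnit_iff_coprime _ _).mpr hcop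
  obtain ⟨q, hq0, hqprime, hqmod⟩ := Nat.forall_exists_prime_gt_and_eq_mod hunit 1
  haveI hqf : Fact q.Prime := ⟨hqprime⟩
  have hqmod' : q ≡ 4*k+1 [MOD 4*n] := (ZMod.natCast_eq_natCast_iff _ _ _).mp hqmod
  have hq4 : q % 4 = 1 := by
    have h := hqmod'.of_dvd (by omega : 4 ∣ 4*n)
    have h2 : q % 4 = (4*k+1) % 4 := h
    omega
  have hqn : q ≡ 4*k+1 [MOD n] := hqmod'.of_dvd ⟨4, by ring⟩
  have hq2 : q % 2 = 1 := by omega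
  have hq1 : 1 ≤ q := hqprime.one_lt.le
  have hdvd : n ∣ 2*q+1 := by
    have h1 : 2*q+1 ≡ 2*(4*k+1)+1 [MOD n] := (hqn.mul_left 2).add_right 1
    have h2 : 2*(4*k+1)+1 = n := by omega
    rw [h2] at h1
    exact (Nat.modEq_zero_iff_dvd).mp (h1.trans ((Nat.modEq_zero_iff_dvd).mpr dvd_rfl))
  obtain ⟨m, hm⟩ := hdvd
  have hm1 : 1 ≤ m := by nlinarith [hm]
  have hoddn : Odd n := ⟨4*k+1, by omega⟩
  have hoddq : Odd q := Nat.odd_iff.mpr hq2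
  have hgcd2n : Nat.Coprime 2 n := (Nat.prime_two.coprime_iff_not_dvd).mpr (by omega)
  have hgcd2q : Nat.Coprime 2 q := (Nat.prime_two.coprime_iff_not_dvd).mpr (by omega)
  -- Jacobi symbol computation
  have hJ : J((n:ℤ) | q) = 1 := by
    have e1 : J((q:ℤ) | n) = J((n:ℤ) | q) :=
      jacobiSym.quadratic_reciprocity_one_mod_four hq4 hoddn
    have e2 : J(((4*q : ℕ) :ℤ) | n) = J((q:ℤ) | n) := by
      have h4 : ((4*q : ℕ) : ℤ) = (2:ℤ)^2 * q := by push_cast; ring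
      rw [h4, jacobiSym.mul_left, jacobiSym.sq_one' (by simpa [Int.gcd] using hgcd2n), one_mul]
    have e3 : J(((4*q : ℕ):ℤ) | n) = J((-2 : ℤ) | n) := by
      apply jacobiSym.mod_left'
      have h5 : ((4*q : ℕ) : ℤ) = -2 + (n:ℤ)*(2*m) := by push_cast; nlinarith [hm]
      rw [h5, Int.add_mul_emod_self_left]
    have e4 : J((-2 : ℤ) | n) = 1 := by
      rw [jacobiSym.at_neg_two hoddn, ZMod.χ₈'_nat_eq_if_mod_eight]
      have h2 : ¬(n % 2 = 0) := by omega
      have h3 : n % 8 = 1 ∨ n % 8 = 3 := by omega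
      rw [if_neg h2, if_pos h3]
    rw [← e1, ← e2, e3, e4]
  have hsqn : IsSquare ((n:ℤ) : ZMod q) := ZMod.isSquare_of_jacobiSym_eq_one hJ
  have hsqneg1 : IsSquare (-1 : ZMod q) := ZMod.exists_sq_eq_neg_one_iff.mpr (by omega)
  have hnm_inv : ((n:ℕ) : ZMod q) * ((m:ℕ) : ZMod q) = 1 := by
    have h1 : ((n*m : ℕ) : ZMod q) = ((2*q+1 : ℕ) : ZMod q) := by rw [hm]
    push_cast [ZMod.natCast_self] at h1
    push_cast
    rw [h1]; ring
  have hsqm : IsSquare (-((m:ℕ) : ZMod q)) := by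
    have hmn : ((n:ℤ) : ZMod q) = ((n:ℕ) : ZMod q) := by push_cast; ring
    have heq : (-((m:ℕ) : ZMod q)) = (-1) * ((n:ℕ) : ZMod q) * ((m:ℕ) : ZMod q)^2 := by
      linear_combination (((m:ℕ) : ZMod q)) * hnm_inv
    rw [heq]
    exact ((hsqneg1.mul (hmn ▸ hsqn)).mul ⟨((m:ℕ) : ZMod q), by ring⟩)
  obtain ⟨w, hw⟩ := hsqm
  obtain ⟨u, hu_cast, hu_odd⟩ : ∃ u : ℕ, ((u:ℕ) : ZMod q) = w ∧ u % 2 = 1 := by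
    refine ⟨if Even w.val then w.val + q else w.val, ?_, ?_⟩
    · split
      · push_cast [ZMod.natCast_self]
        simpa using ZMod.natCast_rightInverse w
      · simpa using ZMod.natCast_rightInverse w
    · rcases Nat.even_or_odd w.val with he | ho
      · have he' : w.val % 2 = 0 := Nat.even_iff.mp he
        rw [if_pos he]
        omega
      · have ho' : w.val % 2 = 1 := Nat.odd_iff.mp ho
        rw [if_neg (by simpa [Nat.even_iff] using ho')]
        exact ho'
  have hm2 : m % 2 = 1 := by
    have hodd : Odd (n*m) := by rw [← hm]; exact ⟨q, by ring⟩
    exact Nat.odd_iff.mp (Nat.odd_mul.mp hodd).2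
  have hdvd2q : (2*(q:ℤ)) ∣ ((u:ℤ)^2 + m) := by
    have hq_dvd : ((q:ℤ)) ∣ ((u:ℤ)^2 + m) := by
      rw [← ZMod.intCast_zmod_eq_zero_iff_dvd]
      push_cast
      rw [hu_cast]
      linear_combination -hw
    have h2_dvd : (2:ℤ) ∣ ((u:ℤ)^2 + m) := by
      have ho : Odd ((u:ℤ)) := Int.odd_iff.mpr (by omega)
      have ho2 : Odd ((u:ℤ)^2) := ho.pow
      have hom : Odd ((m:ℤ)) := Int.odd_iff.mpr (by omega)
      exact (Odd.add_odd ho2 hom).two_dvd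
    exact IsCoprime.mul_dvd
      (Int.isCoprime_iff_gcd_eq_one.mpr (by simpa [Int.gcd] using hgcd2q)) h2_dvd hq_dvd
  obtain ⟨a₀, ha₀⟩ : ∃ a₀ : ℤ, 2*(q:ℤ)*a₀ = (u:ℤ)^2 + m :=
    ⟨((u:ℤ)^2 + m) / (2*(q:ℤ)), Int.mul_ediv_cancel' hdvd2q⟩
  have hmZ : (n:ℤ)*m = 2*(q:ℤ)+1 := by exact_mod_cast hm.symm
  have hq0' : (0:ℤ) < q := by exact_mod_cast hq1
  have ha₀1 : 1 ≤ a₀ := by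
    by_contra hcon
    push_neg at hcon
    have h1 : 2*(q:ℤ)*a₀ ≤ 0 :=
      mul_nonpos_of_nonneg_of_nonpos (by positivity) (by omega)
    have h2 : (1:ℤ) ≤ m := by exact_mod_cast hm1
    nlinarith [sq_nonneg ((u:ℤ))]
  have hn3 : (3:ℤ) ≤ n := by push_cast [hn]; omega
  have hD2 : (2:ℤ) ≤ (n:ℤ)*a₀ - 1 := by nlinarith
  -- the ternary form (n, a₀, 2q, u, 0, 1)
  have hdet : (n:ℤ)*a₀*(2*q) + 2*(u:ℤ)*0*1 - (n:ℤ)*(u:ℤ)^2 - a₀*0^2 - (2*(q:ℤ))*1^2 = 1 := by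
    linear_combination (n:ℤ)*ha₀ + hmZ
  have key : ∀ x y z : ℤ, ((n:ℤ)*a₀-1) * ((n:ℤ) * QF (n:ℤ) a₀ (2*q) (u:ℤ) 0 1 x y z) =
      ((n:ℤ)*a₀-1)*((n:ℤ)*x + y)^2 + (((n:ℤ)*a₀-1)*y + (n:ℤ)*(u:ℤ)*z)^2 + (n:ℤ)*z^2 := by
    intro x y z
    unfold QF
    linear_combination ((n:ℤ)^2*z^2) * ha₀ + ((n:ℤ)*z^2) * hmZ
  have hPD : PD (n:ℤ) a₀ (2*(q:ℤ)) (u:ℤ) 0 1 := pd_aux _ _ _ _ hn3 hD2 key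
  obtain ⟨p₁, p₂, p₃, q₁, q₂, q₃, w₁, w₂, w₃, hsos⟩ :=
    descent ((n:ℤ) + a₀ + 2*(q:ℤ)).toNat (n:ℤ) a₀ (2*(q:ℤ)) (u:ℤ) 0 1 hPD
      (by linear_combination hdet) (Int.self_le_toNat _)
  have hval := hsos 1 0 0
  have hQval : QF (n:ℤ) a₀ (2*(q:ℤ)) (u:ℤ) 0 1 1 0 0 = (n:ℤ) := by unfold QF; ring
  rw [hQval] at hval
  refine ⟨p₁, q₁, w₁, ?_⟩
  have hcast : ((n:ℕ):ℤ) = 8*(k:ℤ)+3 := by push_cast [hn]; ring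
  rw [← hcast, hval]
  ring

-- helper: odd square decomposition
private theorem odd_sq_tri (x : ℤ) (hodd : (x:ZMod 8)^2 = 1) :
    ∃ e T : ℕ, x^2 = ((8*T+1 : ℕ) : ℤ) ∧ (e+1)*((e+1)-1)/2 = T := by
  have hx_odd : Odd x := by
    rcases Int.even_or_odd x with ⟨j, hj⟩ | ho
    · exfalso
      subst hj
      have : ((j:ZMod 8) + j)^2 = 1 := by exact_mod_cast hodd
      have h4 : ∀ v : ZMod 8, (v + v)^2 ≠ 1 := by decide
      exact h4 _ this
    · exact ho
  have hd_odd : Odd x.natAbs := Int.natAbs_odd.mpr hx_odd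
  obtain ⟨e, he⟩ := hd_odd
  have h2 : 2 ∣ e*(e+1) := (Nat.even_mul_succ_self e).two_dvd
  obtain ⟨T, hT⟩ := h2
  refine ⟨e, T, ?_, ?_⟩
  · have h3 : x^2 = ((x.natAbs : ℤ))^2 := (Int.natAbs_sq x).symm
    rw [h3, he]
    push_cast
    nlinarith [hT]
  · have h4 : (e+1)*((e+1)-1) = 2*T := by
      have : (e+1)*((e+1)-1) = e*(e+1) := by
        simp [Nat.add_sub_cancel]
        ring
      rw [this, hT]
    rw [h4]
    omega


end EurekaAux


/-- Gauss' Eureka theorem: every natural number is the sum of three triangular numbers. -/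
theorem eureka (k : ℕ) :
    ∃ k₀ k₁ k₂ : ℕ, k = k₀ * (k₀ - 1) / 2 + k₁ * (k₁ - 1) / 2 + k₂ * (k₂ - 1) / 2 := by
  obtain ⟨x, y, z, hxyz⟩ := EurekaAux.three_squares k
  have h8 : ((x:ZMod 8))^2 + ((y:ZMod 8))^2 + ((z:ZMod 8))^2 = 3 := by
    have := congrArg (fun m : ℤ => (m : ZMod 8)) hxyz
    push_cast at this
    rw [← this]
    have h80 : ((8:ZMod 8)) = 0 := by decide
    rw [h80]
    ring
  have hall : ∀ A B C : ZMod 8, A^2 + B^2 + C^2 = 3 → A^2 = 1 ∧ B^2 = 1 ∧ C^2 = 1 := by decide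
  obtain ⟨hx1, hy1, hz1⟩ := hall _ _ _ h8
  obtain ⟨e₀, T₀, hxT, he₀⟩ := EurekaAux.odd_sq_tri x hx1
  obtain ⟨e₁, T₁, hyT, he₁⟩ := EurekaAux.odd_sq_tri y hy1
  obtain ⟨e₂, T₂, hzT, he₂⟩ := EurekaAux.odd_sq_tri z hz1
  have hsum : 8*(k:ℤ)+3 = ((8*T₀+1 : ℕ):ℤ) + ((8*T₁+1 : ℕ):ℤ) + ((8*T₂+1 : ℕ):ℤ) := by
    rw [hxyz, hxT, hyT, hzT]
  have hsumN : 8*k+3 = (8*T₀+1) + (8*T₁+1) + (8*T₂+1) := by exact_mod_cast hsum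
  have hk : k = T₀ + T₁ + T₂ := by omega
  exact ⟨e₀+1, e₁+1, e₂+1, by rw [he₀, he₁, he₂]; omega⟩
end

section
/- Let k ≥ 1 be a natural number and let G be a finite simple graph without isolated vertices. If G contains an independent set of size (k−1)² + 1, then G contains a k-edge induced subgraph. -/
set_option linter.unusedSectionVars false


namespace LargeIndepAux

variable {V : Type*} [Fintype V] [DecidableEq V] (G : SimpleGraph V) [DecidableRel G.Adj]

/-- Number of edges of `G` with both endpoints in `T`. -/
noncomputable def em (T : Finset V) : ℕ := {e ∈ G.edgeSet | ∀ v ∈ e, v ∈ T}.ncard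

/-- Number of neighbours of `a` inside `C`. -/
def degTo (a : V) (C : Finset V) : ℕ := (C.filter fun c => G.Adj a c).card

lemma degTo_le_card (a : V) (C : Finset V) : degTo G a C ≤ C.card :=
  Finset.card_filter_le _ _

lemma degTo_mono (a : V) {C C' : Finset V} (h : C ⊆ C') : degTo G a C ≤ degTo G a C' :=
  Finset.card_le_card (Finset.filter_subset_filter _ h)

lemma degTo_insert_le (a v : V) (C : Finset V) :
    degTo G a (insert v C) ≤ degTo G a C + 1 := by
  unfold degTo
  rw [Finset.filter_insert]
  split
  · exact (Finset.card_insert_le _ _)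
  · exact Nat.le_succ_of_le le_rfl

lemma degTo_eq_zero (a : V) {C : Finset V} (h : ∀ c ∈ C, ¬ G.Adj a c) :
    degTo G a C = 0 := by
  unfold degTo
  rw [Finset.filter_eq_empty_iff.2 h]
  simp

lemma degTo_insert_adj (a v : V) {C : Finset V} (hv : v ∉ C) (hadj : G.Adj a v) :
    degTo G a (insert v C) = degTo G a C + 1 := by
  unfold degTo
  rw [Finset.filter_insert, if_pos hadj, Finset.card_insert_of_notMem]
  intro h
  exact hv (Finset.mem_of_mem_filter _ h)

lemma degTo_union (a : V) {C B : Finset V} (h : Disjoint C B) :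
    degTo G a (C ∪ B) = degTo G a C + degTo G a B := by
  unfold degTo
  rw [Finset.filter_union, Finset.card_union_of_disjoint]
  exact Finset.disjoint_filter_filter h

lemma em_empty : em G (∅ : Finset V) = 0 := by
  unfold em
  convert Set.ncard_empty (Sym2 V)
  ext e
  simp only [Set.mem_setOf_eq, Set.mem_empty_iff_false, iff_false, not_and]
  intro he
  induction e using Sym2.inductionOn with
  | hf x y =>
    intro h
    simpa using h x (by simp)

lemma em_insert {a : V} {T : Finset V} (ha : a ∉ T) :
    em G (insert a T) = em G T + degTo G a T := by
  unfold em degTo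
  have hset : {e ∈ G.edgeSet | ∀ v ∈ e, v ∈ insert a T}
      = {e ∈ G.edgeSet | ∀ v ∈ e, v ∈ T} ∪
        (fun b => s(a, b)) '' (↑(T.filter fun c => G.Adj a c) : Set V) := by
    ext e
    induction e using Sym2.inductionOn with
    | hf x y =>
      simp only [Set.mem_setOf_eq, Set.mem_union, Set.mem_image, Finset.coe_filter,
        SimpleGraph.mem_edgeSet, Sym2.mem_iff, Finset.mem_insert]
      constructor
      · rintro ⟨hadj, hmem⟩
        by_cases hxa : x = a
        · subst hxa
          have hya : y ≠ x := fun h => G.irrefl (h ▸ hadj)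
          have hyT : y ∈ T := by
            rcases hmem y (Or.inr rfl) with h | h
            · exact absurd h hya
            · exact h
          exact Or.inr ⟨y, ⟨hyT, hadj⟩, rfl⟩
        · by_cases hya : y = a
          · subst hya
            have hxT : x ∈ T := by
              rcases hmem x (Or.inl rfl) with h | h
              · exact absurd h hxa
              · exact h
            exact Or.inr ⟨x, ⟨hxT, hadj.symm⟩, Sym2.eq_swap⟩
          · refine Or.inl ⟨hadj, ?_⟩
            intro v hv
            rcases hmem v hv with h | h
            · rcases hv with rfl | rfl
              · exact absurd h hxa
              · exact absurd h hya
            · exact h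
      · rintro (⟨hadj, hmem⟩ | ⟨b, ⟨hbT, hab⟩, heq⟩)
        · exact ⟨hadj, fun v hv => Or.inr (hmem v hv)⟩
        · rw [Sym2.eq_iff] at heq
          rcases heq with ⟨rfl, rfl⟩ | ⟨rfl, rfl⟩
          · refine ⟨hab, ?_⟩
            intro v hv
            rcases hv with rfl | rfl
            · exact Or.inl rfl
            · exact Or.inr hbT
          · refine ⟨hab.symm, ?_⟩
            intro v hv
            rcases hv with rfl | rfl
            · exact Or.inr hbT
            · exact Or.inl rfl
  rw [hset]
  have hdisj : Disjoint {e ∈ G.edgeSet | ∀ v ∈ e, v ∈ T}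
      ((fun b => s(a, b)) '' (↑(T.filter fun c => G.Adj a c) : Set V)) := by
    rw [Set.disjoint_left]
    rintro e ⟨_, hall⟩ ⟨b, _, rfl⟩
    exact ha (hall a (by simp))
  rw [Set.ncard_union_eq hdisj (Set.toFinite _) (Set.toFinite _)]
  congr 1
  rw [Set.ncard_image_of_injOn, Set.ncard_coe_finset]
  intro b _ c _ h
  exact Sym2.congr_right.1 h

lemma em_union_leaves {C : Finset V} :
    ∀ (B : Finset V), (∀ b ∈ B, b ∉ C) → (∀ b ∈ B, ∀ b' ∈ B, ¬ G.Adj b b') →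
      em G (C ∪ B) = em G C + ∑ b ∈ B, degTo G b C := by
  intro B
  induction B using Finset.induction_on with
  | empty => simp
  | @insert b B' hb IH =>
    intro hBC hBadj
    have hbC : b ∉ C := hBC b (Finset.mem_insert_self _ _)
    have hbCB : b ∉ C ∪ B' := by
      simp only [Finset.mem_union]
      rintro (h | h)
      · exact hbC h
      · exact hb h
    have hCB' : Disjoint C B' := by
      rw [Finset.disjoint_left]
      intro x hx hx'
      exact hBC x (Finset.mem_insert_of_mem hx') hx
    rw [Finset.union_insert, em_insert G hbCB, degTo_union G b hCB',
      degTo_eq_zero G b (fun c hc => hBadj b (Finset.mem_insert_self _ _) c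
        (Finset.mem_insert_of_mem hc)),
      IH (fun x hx => hBC x (Finset.mem_insert_of_mem hx))
        (fun x hx y hy => hBadj x (Finset.mem_insert_of_mem hx) y (Finset.mem_insert_of_mem hy)),
      Finset.sum_insert hb]
    omega

/-- The chain condition: each weight is at least 1 and at most one more than the
number of elements after it. -/
def ChainCond (f : V → ℕ) : List V → Prop
  | [] => True
  | a :: t => (1 ≤ f a ∧ f a ≤ t.length + 1) ∧ ChainCond f t

lemma chainCond_ge_one {f : V → ℕ} : ∀ {l : List V}, ChainCond f l → ∀ a ∈ l, 1 ≤ f a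
  | [], _, a, ha => absurd ha List.not_mem_nil
  | b :: t, h, a, ha => by
    rcases List.mem_cons.1 ha with rfl | ha'
    · exact h.1.1
    · exact chainCond_ge_one h.2 a ha'

lemma length_le_sum {f : V → ℕ} : ∀ {l : List V}, ChainCond f l → l.length ≤ (l.map f).sum
  | [], _ => le_rfl
  | a :: t, h => by
    simp only [List.map_cons, List.sum_cons, List.length_cons]
    have := length_le_sum h.2
    have := h.1.1
    omega

lemma chainCond_ones {f : V → ℕ} :
    ∀ {l : List V}, (∀ a ∈ l, f a = 1) → ChainCond f l
  | [], _ => trivial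
  | a :: t, h => by
    refine ⟨⟨?_, ?_⟩, chainCond_ones (fun x hx => h x (List.mem_cons_of_mem _ hx))⟩
    · rw [h a List.mem_cons_self]
    · rw [h a List.mem_cons_self]; omega

lemma chainCond_append {f f' : V → ℕ} {m : List V}
    (hmono : ∀ a, f a ≤ f' a) (hstep : ∀ a, f' a ≤ f a + 1)
    (hm : 1 ≤ m.length) (hcm : ChainCond f' m) :
    ∀ (l : List V), ChainCond f l → ChainCond f' (l ++ m) := by
  intro l
  induction l with
  | nil => intro _; exact hcm
  | cons a t ih =>
    intro h
    refine ⟨⟨le_trans h.1.1 (hmono a), ?_⟩, ih h.2⟩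
    have h1 := hstep a
    have h2 := h.1.2
    have h3 : (t.append m).length = t.length + m.length := by simp
    have h4 : (t ++ m).length = t.length + m.length := by simp
    omega

lemma cover {f : V → ℕ} : ∀ (l : List V), ChainCond f l → ∀ n, n ≤ (l.map f).sum →
    ∃ l' : List V, l'.Sublist l ∧ (l'.map f).sum = n := by
  intro l
  induction l with
  | nil =>
    intro _ n hn
    refine ⟨[], List.Sublist.refl _, ?_⟩
    simp only [List.map_nil, List.sum_nil] at hn ⊢
    omega
  | cons a t ih =>
    intro h n hn
    simp only [List.map_cons, List.sum_cons] at hn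
    by_cases hna : f a ≤ n
    · obtain ⟨l', hl', hsum⟩ := ih h.2 (n - f a) (by omega)
      refine ⟨a :: l', hl'.cons₂ a, ?_⟩
      simp only [List.map_cons, List.sum_cons, hsum]
      omega
    · obtain ⟨l', hl', hsum⟩ := ih h.2 n (le_trans (by have := h.1.2; omega) (length_le_sum h.2))
      exact ⟨l', hl'.cons a, hsum⟩

lemma master (S : Finset V)
    (hSind : ∀ u ∈ S, ∀ w ∈ S, ¬ G.Adj u w)
    (hnb : ∀ s ∈ S, ∃ v, G.Adj s v)
    (k : ℕ) (hk : 1 ≤ k) (hS : k ≤ S.card) :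
    ∀ (n : ℕ) (S' C : Finset V) (l : List V),
      S'.card = n →
      S' ⊆ S →
      l.toFinset = S \ S' →
      l.Nodup →
      (∀ c ∈ C, c ∉ S) →
      (∀ c ∈ C, ∀ s ∈ S', ¬ G.Adj c s) →
      ChainCond (fun a => degTo G a C) l →
      C.card ≤ (l.map fun a => degTo G a C).sum →
      em G C ≤ k →
      HasKEdgeInducedSubgraph G k := by
  intro n
  induction n using Nat.strong_induction_on with
  | _ n IH =>
    intro S' C l hcard hsub hlf hnd hCS hCS' hchain hC6 hC7
    by_cases hwin : k ≤ em G C + (l.map fun a => degTo G a C).sum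
    · -- we can already realize exactly k edges
      obtain ⟨l', hsubl, hsum⟩ := cover l hchain (k - em G C) (by omega)
      set B : Finset V := l'.toFinset with hB
      have hndl' : l'.Nodup := List.Nodup.sublist hsubl hnd
      have hBS : ∀ b ∈ B, b ∈ S := by
        intro b hbB
        have : b ∈ l.toFinset := by
          rw [List.mem_toFinset] at hbB ⊢
          exact hsubl.mem hbB
        rw [hlf, Finset.mem_sdiff] at this
        exact this.1
      have hsumB : ∑ b ∈ B, degTo G b C = k - em G C := by
        rw [hB, List.sum_toFinset _ hndl', hsum]
      have hemT : em G (C ∪ B) = k := by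
        have h1 : ∀ b ∈ B, b ∉ C := fun b hb hbC => hCS b hbC (hBS b hb)
        have h2 : ∀ b ∈ B, ∀ b' ∈ B, ¬ G.Adj b b' := fun b hb b' hb' =>
          hSind b (hBS b hb) b' (hBS b' hb')
        rw [em_union_leaves G B h1 h2, hsumB]
        omega
      have hCne : C.Nonempty := by
        rcases Finset.eq_empty_or_nonempty C with rfl | h
        · exfalso
          have hl0 : l = [] := by
            cases l with
            | nil => rfl
            | cons a t =>
              exfalso
              have h1 : 1 ≤ degTo G a ∅ := hchain.1.1
              have h0 : degTo G a (∅ : Finset V) = 0 := by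
                unfold degTo; simp
              omega
          rw [hl0] at hwin
          rw [em_empty] at hwin
          simp at hwin
          omega
        · exact h
      obtain ⟨c, hc⟩ := hCne
      exact ⟨C ∪ B, ⟨c, Finset.mem_union_left _ hc⟩, hemT⟩
    · push_neg at hwin
      have hSind' := hSind
      -- S' must be nonempty
      have hS'ne : S'.Nonempty := by
        by_contra h
        rw [Finset.not_nonempty_iff_eq_empty] at h
        subst h
        have hltf : l.toFinset = S := by rw [hlf]; simp
        have h1 : S.card ≤ l.length := by
          rw [← hltf]
          exact l.toFinset_card_le
        have h2 : l.length ≤ (l.map fun a => degTo G a C).sum := length_le_sum hchain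
        omega
      obtain ⟨s, hs⟩ := hS'ne
      obtain ⟨v, hadj⟩ := hnb s (hsub hs)
      have hvS : v ∉ S := fun hvS => hSind s (hsub hs) v hvS hadj
      have hvC : v ∉ C := fun hvC => hCS' v hvC s hs hadj.symm
      set A : Finset V := S'.filter (fun x => G.Adj v x) with hA
      have hsA : s ∈ A := by
        rw [hA, Finset.mem_filter]
        exact ⟨hs, hadj.symm⟩
      have hAne : A.Nonempty := ⟨s, hsA⟩
      have hAS' : A ⊆ S' := Finset.filter_subset _ _
      set C' : Finset V := insert v C with hC'
      set l₂ : List V := l ++ A.toList with hl₂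
      set S'' : Finset V := S' \ A with hS''
      -- facts about old leaves: they are in S, not in S'
      have hlS : ∀ a ∈ l, a ∈ S ∧ a ∉ S' := by
        intro a hal
        have : a ∈ l.toFinset := List.mem_toFinset.2 hal
        rw [hlf, Finset.mem_sdiff] at this
        exact this
      -- new leaves have degTo _ C' = 1
      have hAdeg : ∀ a ∈ A.toList, degTo G a C' = 1 := by
        intro a ha
        rw [Finset.mem_toList, hA, Finset.mem_filter] at ha
        have h0 : degTo G a C = 0 :=
          degTo_eq_zero G a (fun c hc hadj' => hCS' c hc a ha.1 hadj'.symm)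
        rw [hC', degTo_insert_adj G a v hvC ha.2.symm, h0]
      have hnewchain : ChainCond (fun a => degTo G a C') l₂ := by
        apply chainCond_append
        · intro a; exact degTo_mono G a (Finset.subset_insert _ _)
        · intro a; exact degTo_insert_le G a v C
        · rw [Finset.length_toList]
          exact Finset.card_pos.2 hAne
        · exact chainCond_ones hAdeg
        · exact hchain
      have hsumA : ((A.toList).map fun a => degTo G a C').sum = A.card := by
        have : ∀ (m : List V), (∀ a ∈ m, degTo G a C' = 1) →
            (m.map fun a => degTo G a C').sum = m.length := by
          intro m
          induction m with
          | nil => simp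
          | cons a t ihm =>
            intro hm
            simp only [List.map_cons, List.sum_cons, List.length_cons,
              ihm (fun x hx => hm x (List.mem_cons_of_mem _ hx)),
              hm a List.mem_cons_self]
            omega
        rw [this _ hAdeg, Finset.length_toList]
      have hmonosum : (l.map fun a => degTo G a C).sum ≤ (l.map fun a => degTo G a C').sum :=
        List.sum_le_sum (fun a _ => degTo_mono G a (Finset.subset_insert _ _))
      apply IH S''.card ?_ S'' C' l₂ rfl ?_ ?_ ?_ ?_ ?_ hnewchain ?_ ?_
      · -- S''.card < n
        rw [← hcard]
        exact Finset.card_lt_card (Finset.sdiff_ssubset hAS' hAne)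
      · exact (Finset.sdiff_subset).trans hsub
      · -- toFinset l₂ = S \ S''
        rw [hl₂, List.toFinset_append, Finset.toList_toFinset, hlf]
        ext x
        simp only [Finset.mem_union, Finset.mem_sdiff, hS'']
        constructor
        · rintro (⟨hxS, hxS'⟩ | hxA)
          · exact ⟨hxS, fun h => hxS' h.1⟩
          · exact ⟨hsub (hAS' hxA), fun h => h.2 hxA⟩
        · rintro ⟨hxS, hx⟩
          by_cases hxS' : x ∈ S'
          · right
            by_contra hxA
            exact hx ⟨hxS', hxA⟩
          · exact Or.inl ⟨hxS, hxS'⟩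
      · -- Nodup
        rw [hl₂]
        refine List.Nodup.append hnd (Finset.nodup_toList A) ?_
        intro a hal haA
        rw [Finset.mem_toList] at haA
        exact (hlS a hal).2 (hAS' haA)
      · -- centers not in S
        intro c hc
        rcases Finset.mem_insert.1 hc with rfl | hc'
        · exact hvS
        · exact hCS c hc'
      · -- centers nonadjacent to S''
        intro c hc t ht
        rw [hS'', Finset.mem_sdiff] at ht
        rcases Finset.mem_insert.1 hc with rfl | hc'
        · intro hadj'
          exact ht.2 (by rw [hA, Finset.mem_filter]; exact ⟨ht.1, hadj'⟩)
        · exact hCS' c hc' t ht.1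
      · -- card bound
        have h1 : C'.card ≤ C.card + 1 := Finset.card_insert_le _ _
        have h2 : 1 ≤ A.card := Finset.card_pos.2 hAne
        rw [hl₂, List.map_append, List.sum_append, hsumA]
        omega
      · -- em C' ≤ k
        have h1 : em G C' = em G C + degTo G v C := em_insert G hvC
        have h2 : degTo G v C ≤ C.card := degTo_le_card G v C
        omega

end LargeIndepAux

theorem large_independent_set {V : Type*} [Fintype V] (G : SimpleGraph V)
    [DecidableRel G.Adj] (k : ℕ) (hk : 1 ≤ k)
    (hnoiso : ∀ v : V, 0 < G.degree v)
    (S : Finset V) (hScard : S.card = (k - 1) ^ 2 + 1)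
    (hSindep : ∀ u ∈ S, ∀ w ∈ S, u ≠ w → ¬ G.Adj u w) :
    HasKEdgeInducedSubgraph G k := by
  have : DecidableEq V := Classical.decEq V
  have hSind : ∀ u ∈ S, ∀ w ∈ S, ¬ G.Adj u w := by
    intro u hu w hw hadj
    exact hSindep u hu w hw (G.ne_of_adj hadj) hadj
  have hnb : ∀ s ∈ S, ∃ v, G.Adj s v := by
    intro s _
    exact (G.degree_pos_iff_exists_adj s).1 (hnoiso s)
  have hS : k ≤ S.card := by
    rw [hScard]
    have : k - 1 ≤ (k - 1) ^ 2 := by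
      rcases Nat.eq_zero_or_pos (k - 1) with h | h
      · omega
      · calc k - 1 = (k-1) * 1 := by ring
          _ ≤ (k-1) * (k-1) := Nat.mul_le_mul_left _ h
          _ = (k-1)^2 := by ring
    omega
  exact LargeIndepAux.master G S hSind hnb k hk hS S.card S ∅ []
    rfl (Finset.Subset.refl S) (by simp) List.nodup_nil (by simp) (by simp)
    trivial (by simp) (by rw [LargeIndepAux.em_empty]; omega)
end

section
/- Let m, n ≥ 1 be natural numbers and G a finite simple graph. Let A, B ⊆ V(G) be disjoint sets such that every u ∈ A has at least one neighbor in B. If |A| > (m−1)(n−1), then (i) either there exist m pairwise distinct vertices u_1, …, u_m ∈ A and a vertex v ∈ B with {u_i, v} an edge of G for every i ∈ {1,…,m}, (ii) or there exist pairwise distinct vertices u_1, …, u_n ∈ A and pairwise distinct vertices v_1, …, v_n ∈ B such that for all i, j ∈ {1,…,n}, {u_i, v_j} is an edge of G if and only if i = j. -/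
open Finset

open scoped Classical in
private lemma aux_matching {V : Type*} [Fintype V] (G : SimpleGraph V) (m : ℕ) :
    ∀ n : ℕ, 1 ≤ n → ∀ A B : Finset V, Disjoint A B →
    (∀ u ∈ A, ∃ w ∈ B, G.Adj u w) →
    (∀ v ∈ B, (A.filter (fun u => G.Adj u v)).card ≤ m - 1) →
    (m - 1) * (n - 1) < A.card →
    ∃ u v : Fin n → V, Function.Injective u ∧ Function.Injective v ∧
      (∀ i, u i ∈ A) ∧ (∀ i, v i ∈ B) ∧
      ∀ i j, G.Adj (u i) (v j) ↔ i = j := by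
  intro n hn
  induction n, hn using Nat.le_induction with
  | base =>
    intro A B hdisj hnb hstar hcard
    obtain ⟨u0, hu0⟩ := Finset.card_pos.mp (lt_of_le_of_lt (Nat.zero_le _) hcard)
    obtain ⟨v0, hv0B, hadj⟩ := hnb u0 hu0
    refine ⟨fun _ => u0, fun _ => v0, fun i j _ => Subsingleton.elim i j,
      fun i j _ => Subsingleton.elim i j, fun _ => hu0, fun _ => hv0B, fun i j => ?_⟩
    simp [hadj, Subsingleton.elim i j]
  | succ n hn ih =>
    intro A B hdisj hnb hstar hcard
    simp only [Nat.add_sub_cancel] at hcard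
    have hApos : 0 < A.card := lt_of_le_of_lt (Nat.zero_le _) hcard
    obtain ⟨u0, hu0A, hmin⟩ := A.exists_min_image
      (fun u => (B.filter (fun w => G.Adj u w)).card) (Finset.card_pos.mp hApos)
    obtain ⟨v0, hv0B, hadj0⟩ := hnb u0 hu0A
    set A' : Finset V := A.filter (fun u => ¬ G.Adj u v0) with hA'
    set B' : Finset V := B.filter (fun w => ¬ G.Adj u0 w) with hB'
    have hA'sub : A' ⊆ A := Finset.filter_subset _ _
    have hB'sub : B' ⊆ B := Finset.filter_subset _ _
    -- cardinality of A'
    have hsplit : (A.filter (fun u => G.Adj u v0)).card + A'.card = A.card :=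
      Finset.card_filter_add_card_filter_not _
    have hcut : (A.filter (fun u => G.Adj u v0)).card ≤ m - 1 := hstar v0 hv0B
    have hmul : (m - 1) * (n - 1) + (m - 1) = (m - 1) * n := by
      rw [← Nat.mul_succ]
      congr 1
      omega
    have hcard' : (m - 1) * (n - 1) < A'.card := by omega
    -- neighbor property for A', B'
    have hnb' : ∀ u ∈ A', ∃ w ∈ B', G.Adj u w := by
      intro u hu
      rw [hA', Finset.mem_filter] at hu
      obtain ⟨huA, hunadj⟩ := hu
      by_contra hcon
      push_neg at hcon
      have hsub : B.filter (fun w => G.Adj u w) ⊆ B.filter (fun w => G.Adj u0 w) := by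
        intro w hw
        rw [Finset.mem_filter] at hw ⊢
        refine ⟨hw.1, ?_⟩
        by_contra h0
        exact hcon w (by rw [hB', Finset.mem_filter]; exact ⟨hw.1, h0⟩) hw.2
      have heq : B.filter (fun w => G.Adj u w) = B.filter (fun w => G.Adj u0 w) :=
        Finset.eq_of_subset_of_card_le hsub (hmin u huA)
      have : v0 ∈ B.filter (fun w => G.Adj u w) := by
        rw [heq, Finset.mem_filter]; exact ⟨hv0B, hadj0⟩
      rw [Finset.mem_filter] at this
      exact hunadj this.2
    have hstar' : ∀ v ∈ B', (A'.filter (fun u => G.Adj u v)).card ≤ m - 1 := by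
      intro v hv
      exact le_trans (Finset.card_le_card (Finset.filter_subset_filter _ hA'sub))
        (hstar v (hB'sub hv))
    obtain ⟨u, v, huinj, hvinj, huA, hvB, hiff⟩ :=
      ih A' B' (hdisj.mono hA'sub hB'sub) hnb' hstar' hcard'
    -- facts about membership
    have huA'f : ∀ i, ¬ G.Adj (u i) v0 := by
      intro i
      have := huA i
      rw [hA', Finset.mem_filter] at this
      exact this.2
    have hvB'f : ∀ i, ¬ G.Adj u0 (v i) := by
      intro i
      have := hvB i
      rw [hB', Finset.mem_filter] at this
      exact this.2
    refine ⟨Fin.cons u0 u, Fin.cons v0 v, ?_, ?_, ?_, ?_, ?_⟩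
    · intro i j hij
      induction i using Fin.cases with
      | zero =>
        induction j using Fin.cases with
        | zero => rfl
        | succ j =>
          rw [Fin.cons_zero, Fin.cons_succ] at hij
          exact absurd hadj0 (by rw [hij]; exact huA'f j)
      | succ i =>
        induction j using Fin.cases with
        | zero =>
          rw [Fin.cons_zero, Fin.cons_succ] at hij
          exact absurd hadj0 (by rw [← hij]; exact huA'f i)
        | succ j =>
          rw [Fin.cons_succ, Fin.cons_succ] at hij
          exact congrArg Fin.succ (huinj hij)
    · intro i j hij
      induction i using Fin.cases with
      | zero =>
        induction j using Fin.cases with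
        | zero => rfl
        | succ j =>
          rw [Fin.cons_zero, Fin.cons_succ] at hij
          exact absurd hadj0 (by rw [hij]; exact hvB'f j)
      | succ i =>
        induction j using Fin.cases with
        | zero =>
          rw [Fin.cons_zero, Fin.cons_succ] at hij
          exact absurd hadj0 (by rw [← hij]; exact hvB'f i)
        | succ j =>
          rw [Fin.cons_succ, Fin.cons_succ] at hij
          exact congrArg Fin.succ (hvinj hij)
    · intro i
      induction i using Fin.cases with
      | zero => exact hu0A
      | succ i => rw [Fin.cons_succ]; exact hA'sub (huA i)
    · intro i
      induction i using Fin.cases with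
      | zero => exact hv0B
      | succ i => rw [Fin.cons_succ]; exact hB'sub (hvB i)
    · intro i j
      induction i using Fin.cases with
      | zero =>
        induction j using Fin.cases with
        | zero => simpa using hadj0
        | succ j =>
          rw [Fin.cons_zero, Fin.cons_succ]
          simp [(Fin.succ_ne_zero j).symm, hvB'f j]
      | succ i =>
        induction j using Fin.cases with
        | zero =>
          rw [Fin.cons_zero, Fin.cons_succ]
          simp [Fin.succ_ne_zero i, huA'f i]
        | succ j =>
          rw [Fin.cons_succ, Fin.cons_succ]
          rw [hiff i j, Fin.succ_inj]

theorem bipartite_matching_lemma {V : Type*} [Fintype V] (G : SimpleGraph V)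
    (m n : ℕ) (hm : 1 ≤ m) (hn : 1 ≤ n)
    (A B : Finset V) (hdisj : Disjoint A B)
    (hnb : ∀ u ∈ A, ∃ w ∈ B, G.Adj u w)
    (hcard : (m - 1) * (n - 1) < A.card) :
    (∃ u : Fin m → V, Function.Injective u ∧ (∀ i, u i ∈ A) ∧
      ∃ v ∈ B, ∀ i, G.Adj (u i) v) ∨
    (∃ u : Fin n → V, ∃ v : Fin n → V, Function.Injective u ∧ Function.Injective v ∧
      (∀ i, u i ∈ A) ∧ (∀ i, v i ∈ B) ∧
      ∀ i j : Fin n, G.Adj (u i) (v j) ↔ i = j) := by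
  classical
  by_cases hstar : ∃ v ∈ B, m ≤ (A.filter (fun u => G.Adj u v)).card
  · left
    obtain ⟨w, hwB, hwm⟩ := hstar
    obtain ⟨T, hTsub, hTcard⟩ := Finset.exists_subset_card_eq hwm
    have e := T.equivFinOfCardEq hTcard
    refine ⟨fun i => (e.symm i : V), Subtype.coe_injective.comp e.symm.injective, ?_, w, hwB, ?_⟩
    · intro i
      have := hTsub (e.symm i).2
      rw [Finset.mem_filter] at this
      exact this.1
    · intro i
      have := hTsub (e.symm i).2
      rw [Finset.mem_filter] at this
      exact this.2
  · right
    push_neg at hstar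
    exact aux_matching G m n hn A B hdisj hnb (fun v hv => by have := hstar v hv; omega) hcard
end

section
/- Let d, k ≥ 1 be natural numbers and G a finite simple graph. If the number of vertices v of G with 1 ≤ deg(v) ≤ d is greater than (d+1)·(k−1)², then G contains a k-edge induced subgraph. -/
open Finset
set_option linter.unusedSectionVars false
set_option maxHeartbeats 1000000

section SubsetSum

variable {V : Type*} [DecidableEq V]

def unionL (L : List (Finset V)) : Finset V := L.foldr (· ∪ ·) ∅

def massL (δ : V → ℕ) (L : List (Finset V)) : ℕ := (L.map (fun D => D.sum δ)).sum

def Graded (δ : V → ℕ) : ℕ → List (Finset V) → Prop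
  | _, [] => True
  | c, D :: L => (∀ v ∈ D, 1 ≤ δ v ∧ δ v ≤ c + 1) ∧ Disjoint D (unionL L) ∧
      Graded δ (c + D.sum δ) L

@[simp] lemma unionL_nil : unionL ([] : List (Finset V)) = ∅ := rfl
@[simp] lemma unionL_cons (D : Finset V) (L : List (Finset V)) :
    unionL (D :: L) = D ∪ unionL L := rfl
@[simp] lemma massL_nil (δ : V → ℕ) : massL δ ([] : List (Finset V)) = 0 := rfl
@[simp] lemma massL_cons (δ : V → ℕ) (D : Finset V) (L : List (Finset V)) :
    massL δ (D :: L) = D.sum δ + massL δ L := rfl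

lemma unionL_append (L₁ L₂ : List (Finset V)) :
    unionL (L₁ ++ L₂) = unionL L₁ ∪ unionL L₂ := by
  induction L₁ with
  | nil => simp
  | cons D L ih => simp [ih, union_assoc]

lemma massL_append (δ : V → ℕ) (L₁ L₂ : List (Finset V)) :
    massL δ (L₁ ++ L₂) = massL δ L₁ + massL δ L₂ := by
  induction L₁ with
  | nil => simp
  | cons D L ih => simp [ih]; ring

lemma massL_congr {δ δ' : V → ℕ} {L : List (Finset V)}
    (h : ∀ v ∈ unionL L, δ v = δ' v) : massL δ L = massL δ' L := by
  induction L with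
  | nil => rfl
  | cons D L ih =>
    simp only [massL_cons]
    rw [ih (fun v hv => h v (by simp [hv]))]
    congr 1
    exact Finset.sum_congr rfl (fun v hv => h v (by simp [hv]))

lemma Graded_congr {δ δ' : V → ℕ} {L : List (Finset V)} :
    ∀ {c : ℕ}, (∀ v ∈ unionL L, δ v = δ' v) → Graded δ c L → Graded δ' c L := by
  induction L with
  | nil => intro c _ _; trivial
  | cons D L ih =>
    intro c h hg
    obtain ⟨h1, h2, h3⟩ := hg
    refine ⟨fun v hv => (h v (by simp [hv])) ▸ h1 v hv, h2, ?_⟩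
    have hsum : D.sum δ = D.sum δ' := Finset.sum_congr rfl (fun v hv => h v (by simp [hv]))
    rw [← hsum]
    exact ih (fun v hv => h v (by simp [hv])) h3

lemma Graded_append {δ : V → ℕ} {C : Finset V} :
    ∀ (L : List (Finset V)) (c : ℕ), Graded δ c L →
    (∀ v ∈ C, 1 ≤ δ v ∧ δ v ≤ c + massL δ L + 1) → Disjoint (unionL L) C →
    Graded δ c (L ++ [C]) := by
  intro L
  induction L with
  | nil =>
    intro c _ hC _
    exact ⟨by simpa using hC, by simp, trivial⟩
  | cons D L ih =>
    intro c hg hC hdisj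
    obtain ⟨h1, h2, h3⟩ := hg
    simp only [unionL_cons] at hdisj
    refine ⟨h1, ?_, ?_⟩
    · show Disjoint D (unionL (L ++ [C]))
      rw [unionL_append, unionL_cons, unionL_nil, union_empty]
      exact disjoint_union_right.mpr ⟨h2, (disjoint_union_left.mp hdisj).1⟩
    · apply ih (c + D.sum δ) h3 _ (disjoint_union_left.mp hdisj).2
      intro v hv
      have h5 := hC v hv
      simp only [massL_cons] at h5
      omega

lemma massL_ge_length {δ : V → ℕ} :
    ∀ (L : List (Finset V)) (c : ℕ), Graded δ c L → (∀ D ∈ L, D.Nonempty) →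
      L.length ≤ massL δ L := by
  intro L
  induction L with
  | nil => intro c _ _; simp
  | cons D L ih =>
    intro c hg hne
    obtain ⟨h1, _, h3⟩ := hg
    obtain ⟨v, hv⟩ := hne D (by simp)
    have h4 : 1 ≤ D.sum δ :=
      le_trans (h1 v hv).1 (Finset.single_le_sum (fun i _ => Nat.zero_le _) hv)
    have h5 := ih (c + D.sum δ) h3 (fun D hD => hne D (by simp [hD]))
    simp only [List.length_cons, massL_cons]
    omega

lemma SS0 (δ : V → ℕ) :
    ∀ (n : ℕ) (D : Finset V) (c g : ℕ), D.card ≤ n →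
      (∀ v ∈ D, 1 ≤ δ v ∧ δ v ≤ c + 1) → g ≤ c + D.sum δ →
      ∃ K ⊆ D, g ≤ c + K.sum δ ∧ K.sum δ ≤ g := by
  intro n
  induction n with
  | zero =>
    intro D c g hcard _ hg
    refine ⟨∅, empty_subset _, ?_, by simp⟩
    rw [card_eq_zero.mp (Nat.le_zero.mp hcard)] at hg
    simpa using hg
  | succ n ih =>
    intro D c g hcard hb hg
    by_cases hgc : g ≤ c
    · exact ⟨∅, empty_subset _, by simp; omega, by simp⟩
    push_neg at hgc
    have hDne : D.Nonempty := by
      by_contra hD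
      rw [not_nonempty_iff_eq_empty.mp hD] at hg
      simp at hg; omega
    obtain ⟨v, hv⟩ := hDne
    have hδv := hb v hv
    have hsum : D.sum δ = δ v + (D.erase v).sum δ := by
      rw [add_comm, Finset.sum_erase_add D δ hv]
    have hrec := ih (D.erase v) c (g - δ v)
      (by have := Finset.card_erase_of_mem hv; omega)
      (fun x hx => hb x (mem_of_mem_erase hx))
      (by omega)
    obtain ⟨K', hK'sub, hK'1, hK'2⟩ := hrec
    have hvK' : v ∉ K' := fun h => (Finset.notMem_erase v D) (hK'sub h)
    refine ⟨insert v K', ?_, ?_, ?_⟩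
    · intro x hx
      rcases mem_insert.mp hx with rfl | hx
      · exact hv
      · exact mem_of_mem_erase (hK'sub hx)
    · rw [sum_insert hvK']
      have hKs : ∑ x ∈ K', δ x = K'.sum δ := rfl
      omega
    · rw [sum_insert hvK']
      have hKs : ∑ x ∈ K', δ x = K'.sum δ := rfl
      omega

lemma SS (δ : V → ℕ) :
    ∀ (L : List (Finset V)) (c r : ℕ), Graded δ c L → r ≤ c + massL δ L →
      ∃ J ⊆ unionL L, r ≤ c + J.sum δ ∧ J.sum δ ≤ r := by
  intro L
  induction L with
  | nil =>
    intro c r _ hr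
    exact ⟨∅, by simp, by simpa using hr, by simp⟩
  | cons D L ih =>
    intro c r hg hr
    obtain ⟨h1, h2, h3⟩ := hg
    obtain ⟨J', hJ'sub, hJ'1, hJ'2⟩ := ih (c + D.sum δ) r h3 (by simp at hr; omega)
    obtain ⟨K, hKsub, hK1, hK2⟩ := SS0 δ D.card D c (r - J'.sum δ) le_rfl h1 (by omega)
    have hdisjKJ : Disjoint K J' := h2.mono hKsub hJ'sub
    refine ⟨K ∪ J', ?_, ?_, ?_⟩
    · simp only [unionL_cons]
      exact union_subset_union hKsub hJ'sub
    · rw [sum_union hdisjKJ]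
      have h6 : ∑ x ∈ K, δ x = K.sum δ := rfl
      have h7 : ∑ x ∈ J', δ x = J'.sum δ := rfl
      omega
    · rw [sum_union hdisjKJ]
      have h6 : ∑ x ∈ K, δ x = K.sum δ := rfl
      have h7 : ∑ x ∈ J', δ x = J'.sum δ := rfl
      omega

end SubsetSum

section Graph

variable {V : Type*} [Fintype V] [DecidableEq V] (G : SimpleGraph V) [DecidableRel G.Adj]

open Classical in
noncomputable def eCard (S : Finset V) : ℕ :=
  (G.edgeFinset.filter fun e => ∀ v ∈ e, v ∈ S).card

lemma eCard_set_eq (S : Finset V) :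
    {e ∈ G.edgeSet | ∀ v ∈ e, v ∈ S}.ncard = eCard G S := by
  classical
  rw [eCard, ← Set.ncard_coe_finset]
  congr 1
  ext e
  simp [SimpleGraph.mem_edgeFinset]

lemma eCard_insert (S : Finset V) {v : V} (hv : v ∉ S) :
    eCard G (insert v S) = eCard G S + (G.neighborFinset v ∩ S).card := by
  classical
  unfold eCard
  have himg : (G.edgeFinset.filter fun e => ∀ x ∈ e, x ∈ insert v S)
      = (G.edgeFinset.filter fun e => ∀ x ∈ e, x ∈ S) ∪
        (G.neighborFinset v ∩ S).image (fun w => s(v, w)) := by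
    ext e
    induction e using Sym2.ind with
    | _ a b =>
      simp only [mem_filter, mem_union, mem_image, mem_inter, SimpleGraph.mem_edgeFinset,
        SimpleGraph.mem_edgeSet, Sym2.mem_iff, SimpleGraph.mem_neighborFinset, mem_insert,
        Sym2.eq_iff]
      constructor
      · rintro ⟨hab, h⟩
        have ha := h a (Or.inl rfl)
        have hb := h b (Or.inr rfl)
        rcases ha with ha | ha
        · subst ha
          rcases hb with hb | hb
          · exact absurd (hb ▸ hab) (G.irrefl)
          · exact Or.inr ⟨b, ⟨hab, hb⟩, Or.inl ⟨rfl, rfl⟩⟩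
        · rcases hb with hb | hb
          · subst hb
            exact Or.inr ⟨a, ⟨hab.symm, ha⟩, Or.inr ⟨rfl, rfl⟩⟩
          · exact Or.inl ⟨hab, by rintro x (rfl | rfl) <;> assumption⟩
      · rintro (⟨hab, h⟩ | ⟨w, ⟨hw1, hw2⟩, (⟨rfl, rfl⟩ | ⟨rfl, rfl⟩)⟩)
        · exact ⟨hab, by rintro x (rfl | rfl) <;> exact Or.inr (h _ (by simp))⟩
        · exact ⟨hw1, by rintro x (rfl | rfl) <;> simp [hw2]⟩
        · exact ⟨hw1.symm, by rintro x (rfl | rfl) <;> simp [hw2]⟩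
  rw [himg, card_union_of_disjoint, card_image_of_injective]
  · intro a b hab
    rw [Sym2.eq_iff] at hab
    rcases hab with ⟨-, h⟩ | ⟨h1, h2⟩
    · exact h
    · rw [← h1, h2]
  · rw [disjoint_left]
    rintro e he1 he2
    rw [mem_image] at he2
    obtain ⟨w, hw, rfl⟩ := he2
    rw [mem_filter] at he1
    exact hv (he1.2 v (by simp))

lemma eCard_indep {K : Finset V} (h : ∀ x ∈ K, ∀ y ∈ K, ¬ G.Adj x y) :
    eCard G K = 0 := by
  classical
  rw [eCard, card_eq_zero, filter_eq_empty_iff]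
  intro e he
  induction e using Sym2.ind with
  | _ a b =>
    rw [SimpleGraph.mem_edgeFinset, SimpleGraph.mem_edgeSet] at he
    intro hmem
    exact h a (hmem a (by simp)) b (hmem b (by simp)) he

lemma eCard_singleton (x : V) : eCard G {x} = 0 :=
  eCard_indep G (by
    intro a ha b hb
    rw [mem_singleton] at ha hb
    subst ha; subst hb
    exact G.irrefl)

lemma eCard_union_indep (I : Finset V) (hind : ∀ x ∈ I, ∀ y ∈ I, ¬ G.Adj x y)
    (T : Finset V) (hTI : Disjoint T I) :
    ∀ (J : Finset V), J ⊆ I →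
      eCard G (T ∪ J) = eCard G T + J.sum (fun v => (G.neighborFinset v ∩ T).card) := by
  classical
  intro J
  induction J using Finset.induction_on with
  | empty => simp
  | insert v J' hvJ ih =>
    intro hJ
    have hvI : v ∈ I := hJ (mem_insert_self v J')
    have hJ' : J' ⊆ I := fun x hx => hJ (mem_insert_of_mem hx)
    have hvT : v ∉ T := fun hvT => (disjoint_left.mp hTI) hvT hvI
    have hvTJ : v ∉ T ∪ J' := by
      simp only [mem_union, not_or]
      exact ⟨hvT, hvJ⟩
    rw [union_insert, eCard_insert G _ hvTJ, ih hJ', sum_insert hvJ]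
    have hNJ : G.neighborFinset v ∩ (T ∪ J') = G.neighborFinset v ∩ T := by
      ext x
      simp only [mem_inter, SimpleGraph.mem_neighborFinset, mem_union]
      constructor
      · rintro ⟨hadj, hx | hx⟩
        · exact ⟨hadj, hx⟩
        · exact absurd hadj (hind v hvI x (hJ' hx))
      · exact fun ⟨hadj, hx⟩ => ⟨hadj, Or.inl hx⟩
    rw [hNJ]
    ring

lemma exists_indep (d : ℕ) :
    ∀ (n : ℕ) (A : Finset V), A.card ≤ n → (∀ v ∈ A, G.degree v ≤ d) →
      ∃ I ⊆ A, (∀ x ∈ I, ∀ y ∈ I, ¬ G.Adj x y) ∧ A.card ≤ (d + 1) * I.card := by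
  intro n
  induction n with
  | zero =>
    intro A hA _
    exact ⟨∅, empty_subset _, by simp,
      by simp only [card_empty, Nat.mul_zero, Nat.le_zero]; omega⟩
  | succ n ih =>
    intro A hA hdeg
    rcases A.eq_empty_or_nonempty with rfl | ⟨v, hv⟩
    · exact ⟨∅, empty_subset _, by simp, by simp⟩
    set X := insert v (G.neighborFinset v) with hX
    have hvX : v ∈ X := mem_insert_self _ _
    have hXcard : X.card ≤ d + 1 := by
      calc X.card ≤ (G.neighborFinset v).card + 1 := card_insert_le _ _
        _ ≤ d + 1 := by
            have := hdeg v hv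
            rw [← G.card_neighborFinset_eq_degree] at this
            omega
    set A' := A \ X with hA'
    have hA'card : A'.card < A.card := by
      apply card_lt_card
      constructor
      · exact sdiff_subset
      · intro hsub
        have := hsub hv
        rw [hA', mem_sdiff] at this
        exact this.2 hvX
    obtain ⟨I', hI'sub, hI'ind, hI'card⟩ := ih A' (by omega)
      (fun x hx => hdeg x (mem_sdiff.mp hx).1)
    have hvI' : v ∉ I' := fun h => (mem_sdiff.mp (hI'sub h)).2 hvX
    have hnadj : ∀ x ∈ I', ¬ G.Adj v x := by
      intro x hx hadj
      exact (mem_sdiff.mp (hI'sub hx)).2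
        (mem_insert_of_mem (by rwa [SimpleGraph.mem_neighborFinset]))
    refine ⟨insert v I', ?_, ?_, ?_⟩
    · intro x hx
      rcases mem_insert.mp hx with rfl | hx
      · exact hv
      · exact (mem_sdiff.mp (hI'sub hx)).1
    · intro x hx y hy hadj
      rcases mem_insert.mp hx with hx1 | hx1
      · rcases mem_insert.mp hy with hy1 | hy1
        · rw [hx1, hy1] at hadj; exact G.irrefl hadj
        · rw [hx1] at hadj; exact hnadj y hy1 hadj
      · rcases mem_insert.mp hy with hy1 | hy1
        · rw [hy1] at hadj; exact hnadj x hx1 hadj.symm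
        · exact hI'ind x hx1 y hy1 hadj
    · rw [card_insert_of_notMem hvI']
      have hsplit : A.card ≤ A'.card + X.card := by
        have hsub2 : A ⊆ A' ∪ X := by
          intro x hx
          by_cases hxX : x ∈ X
          · exact mem_union_right _ hxX
          · exact mem_union_left _ (mem_sdiff.mpr ⟨hx, hxX⟩)
        calc A.card ≤ (A' ∪ X).card := card_le_card hsub2
          _ ≤ A'.card + X.card := card_union_le _ _
      have : (d + 1) * (I'.card + 1) = (d + 1) * I'.card + (d + 1) := by ring
      omega

lemma grand (I : Finset V) (hind : ∀ x ∈ I, ∀ y ∈ I, ¬ G.Adj x y)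
    (hdeg : ∀ v ∈ I, (G.neighborFinset v).Nonempty)
    (k : ℕ) (hcase2 : ∀ w ∉ I, (G.neighborFinset w ∩ I).card ≤ k - 1)
    (x0 : V) :
    ∀ (m : ℕ) (I' : Finset V), I'.card ≤ m → I' ⊆ I →
    ∃ (T : Finset V) (L : List (Finset V)),
      I'.card ≤ (k - 1) * L.length ∧
      T.card = L.length ∧
      (∀ D ∈ L, D.Nonempty) ∧
      Graded (fun v => (G.neighborFinset v ∩ T).card) 0 L ∧
      unionL L ⊆ I' ∧
      Disjoint T I ∧
      (∀ u ∈ T, ∃ z ∈ I', G.Adj u z) ∧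
      (∀ n, n ≤ eCard G T + massL (fun v => (G.neighborFinset v ∩ T).card) L →
        ∃ S : Finset V, S.Nonempty ∧ eCard G S = n) := by
  intro m
  induction m with
  | zero =>
    intro I' hI'card _
    have hempty : I' = ∅ := card_eq_zero.mp (Nat.le_zero.mp hI'card)
    subst hempty
    refine ⟨∅, [], by simp, by simp, by simp, trivial, by simp, by simp, by simp, ?_⟩
    intro n hn
    have h0 : eCard G (∅ : Finset V) = 0 := eCard_indep G (by simp)
    rw [h0, massL_nil] at hn
    have : n = 0 := by omega
    subst this
    exact ⟨{x0}, singleton_nonempty _, eCard_singleton G x0⟩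
  | succ m ih =>
    intro I' hI'card hsub
    rcases I'.eq_empty_or_nonempty with rfl | ⟨v0, hv0⟩
    · exact ih ∅ (by simp) (empty_subset _)
    have hv0I : v0 ∈ I := hsub hv0
    obtain ⟨w, hwmem⟩ := hdeg v0 hv0I
    rw [SimpleGraph.mem_neighborFinset] at hwmem
    have hwI : w ∉ I := fun hwI => hind v0 hv0I w hwI hwmem
    set C := G.neighborFinset w ∩ I' with hCdef
    have hv0C : v0 ∈ C := mem_inter.mpr
      ⟨by rw [SimpleGraph.mem_neighborFinset]; exact hwmem.symm, hv0⟩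
    have hCsub : C ⊆ I' := inter_subset_right
    have hCcard : C.card ≤ k - 1 := by
      refine le_trans (card_le_card ?_) (hcase2 w hwI)
      intro x hx
      exact mem_inter.mpr ⟨(mem_inter.mp hx).1, hsub (mem_inter.mp hx).2⟩
    set I'' := I' \ C with hI''def
    have hI''lt : I''.card < I'.card := by
      apply card_lt_card
      exact ⟨sdiff_subset, fun hs => (mem_sdiff.mp (hs hv0)).2 hv0C⟩
    obtain ⟨T', L', hA, hB, hCne, hD, hE, hF, hG, hH⟩ :=
      ih I'' (by omega) (fun x hx => hsub (mem_sdiff.mp hx).1)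
    have hwT' : w ∉ T' := by
      intro hwT
      obtain ⟨z, hz, hadj⟩ := hG w hwT
      exact (mem_sdiff.mp hz).2 (mem_inter.mpr
        ⟨by rw [SimpleGraph.mem_neighborFinset]; exact hadj, (mem_sdiff.mp hz).1⟩)
    set T := insert w T' with hTdef
    set δT := fun v => (G.neighborFinset v ∩ T).card with hδT
    set δT' := fun v => (G.neighborFinset v ∩ T').card with hδT'
    have hδcong : ∀ v ∈ unionL L', δT' v = δT v := by
      intro v hv
      have hvI'' : v ∈ I'' := hE hv
      have hvnw : w ∉ G.neighborFinset v := by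
        intro hmem
        rw [SimpleGraph.mem_neighborFinset] at hmem
        exact (mem_sdiff.mp hvI'').2 (mem_inter.mpr
          ⟨by rw [SimpleGraph.mem_neighborFinset]; exact hmem.symm, (mem_sdiff.mp hvI'').1⟩)
      simp only [hδT, hδT', hTdef]
      congr 1
      rw [inter_insert_of_notMem hvnw]
    have hmassEq : massL δT' L' = massL δT L' := massL_congr hδcong
    have hGr' : Graded δT 0 L' := Graded_congr hδcong hD
    have hlen' : L'.length ≤ massL δT L' := massL_ge_length L' 0 hGr' hCne
    have hTcard : T.card = T'.card + 1 := card_insert_of_notMem hwT'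
    have hdisjL'C : Disjoint (unionL L') C := by
      rw [disjoint_left]
      intro x hx hxC
      exact (mem_sdiff.mp (hE hx)).2 hxC
    have hCbound : ∀ v ∈ C, 1 ≤ δT v ∧ δT v ≤ 0 + massL δT L' + 1 := by
      intro v hvC
      constructor
      · apply card_pos.mpr
        refine ⟨w, mem_inter.mpr ⟨?_, mem_insert_self _ _⟩⟩
        rw [SimpleGraph.mem_neighborFinset]
        have := (mem_inter.mp hvC).1
        rw [SimpleGraph.mem_neighborFinset] at this
        exact this.symm
      · calc δT v ≤ T.card := card_le_card inter_subset_right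
          _ = T'.card + 1 := hTcard
          _ = L'.length + 1 := by rw [hB]
          _ ≤ 0 + massL δT L' + 1 := by omega
    have hGrFull : Graded δT 0 (L' ++ [C]) := Graded_append L' 0 hGr' hCbound hdisjL'C
    refine ⟨T, L' ++ [C], ?_, ?_, ?_, hGrFull, ?_, ?_, ?_, ?_⟩
    · -- card bound
      have hsplit : I''.card + C.card = I'.card := card_sdiff_add_card_eq_card hCsub
      rw [List.length_append, List.length_singleton]
      have : (k - 1) * (L'.length + 1) = (k - 1) * L'.length + (k - 1) := by ring
      omega
    · rw [List.length_append, List.length_singleton, hTcard, hB]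
    · intro D hD2
      rcases List.mem_append.mp hD2 with hD2 | hD2
      · exact hCne D hD2
      · rw [List.mem_singleton.mp hD2]; exact ⟨v0, hv0C⟩
    · rw [unionL_append, unionL_cons, unionL_nil, union_empty]
      intro x hx
      rcases mem_union.mp hx with hx | hx
      · exact (mem_sdiff.mp (hE hx)).1
      · exact hCsub hx
    · rw [hTdef, disjoint_insert_left]
      exact ⟨hwI, hF⟩
    · intro u hu
      rcases mem_insert.mp hu with rfl | hu
      · exact ⟨v0, hv0, hwmem.symm⟩
      · obtain ⟨z, hz, hadj⟩ := hG u hu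
        exact ⟨z, (mem_sdiff.mp hz).1, hadj⟩
    · -- achievability
      intro n hn
      have hn2 : n ≤ eCard G T + massL δT (L' ++ [C]) := hn
      by_cases hcase : n ≤ eCard G T' + massL δT' L'
      · exact hH n hcase
      push_neg at hcase
      have heT : eCard G T = eCard G T' + (G.neighborFinset w ∩ T').card :=
        eCard_insert G T' hwT'
      have heTb : eCard G T ≤ n := by
        have h1 : (G.neighborFinset w ∩ T').card ≤ T'.card := card_le_card inter_subset_right
        have h2 : T'.card ≤ massL δT' L' := by rw [hB, hmassEq]; exact hlen'
        omega
      obtain ⟨J, hJsub, hJ1, hJ2⟩ := SS δT (L' ++ [C]) 0 (n - eCard G T) hGrFull (by omega)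
      have hJval : J.sum δT = n - eCard G T := by omega
      have hJI : J ⊆ I := by
        intro x hx
        have := hJsub hx
        rw [unionL_append, unionL_cons, unionL_nil, union_empty] at this
        rcases mem_union.mp this with hx2 | hx2
        · exact hsub (mem_sdiff.mp (hE hx2)).1
        · exact hsub (hCsub hx2)
      have hTI : Disjoint T I := by
        rw [hTdef, disjoint_insert_left]
        exact ⟨hwI, hF⟩
      have hreal := eCard_union_indep G I hind T hTI J hJI
      refine ⟨T ∪ J, ⟨w, mem_union_left _ (mem_insert_self _ _)⟩, ?_⟩
      rw [hreal]
      have : J.sum (fun v => (G.neighborFinset v ∩ T).card) = J.sum δT := rfl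
      omega

end Graph

theorem sufficiently_many_small_degree_vertices {V : Type*} [Fintype V]
    (G : SimpleGraph V) [DecidableRel G.Adj] (d k : ℕ) (hd : 1 ≤ d) (hk : 1 ≤ k)
    (h : (d + 1) * (k - 1) ^ 2 <
      (Finset.univ.filter fun v : V => 1 ≤ G.degree v ∧ G.degree v ≤ d).card) :
    HasKEdgeInducedSubgraph G k := by
  classical
  open Finset in
  set A := Finset.univ.filter (fun v : V => 1 ≤ G.degree v ∧ G.degree v ≤ d) with hAdef
  obtain ⟨I, hIA, hind, hIcard⟩ := exists_indep G d A.card A le_rfl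
    (fun v hv => ((mem_filter.mp hv).2).2)
  have hIdeg : ∀ v ∈ I, (G.neighborFinset v).Nonempty := by
    intro v hv
    have h1 := ((mem_filter.mp (hIA hv)).2).1
    rw [← G.card_neighborFinset_eq_degree] at h1
    exact card_pos.mp h1
  have hIbig : (k - 1) ^ 2 < I.card := by
    have hmul : (d + 1) * (k - 1) ^ 2 < (d + 1) * I.card := lt_of_lt_of_le h hIcard
    exact Nat.lt_of_mul_lt_mul_left hmul
  have hIne : I.Nonempty := card_pos.mp (lt_of_le_of_lt (Nat.zero_le _) hIbig)
  obtain ⟨x0, hx0⟩ := hIne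
  by_cases hbig : ∃ w ∉ I, k ≤ (G.neighborFinset w ∩ I).card
  · obtain ⟨w, hwI, hwk⟩ := hbig
    obtain ⟨K, hKsub, hKcard⟩ := Finset.exists_subset_card_eq hwk
    refine ⟨insert w K, insert_nonempty _ _, ?_⟩
    rw [eCard_set_eq]
    have hKI : K ⊆ I := fun x hx => (mem_inter.mp (hKsub hx)).2
    have hwK : w ∉ K := fun hmem => hwI (hKI hmem)
    rw [eCard_insert G K hwK, eCard_indep G (fun x hx y hy => hind x (hKI hx) y (hKI hy))]
    have hNK : G.neighborFinset w ∩ K = K :=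
      inter_eq_right.mpr (fun x hx => (mem_inter.mp (hKsub hx)).1)
    rw [hNK, hKcard]
    omega
  · push_neg at hbig
    have hcase2 : ∀ w ∉ I, (G.neighborFinset w ∩ I).card ≤ k - 1 := by
      intro w hw
      have := hbig w hw
      omega
    obtain ⟨T, L, hA', hB, hCne, hD, hE, hF, hG, hH⟩ :=
      grand G I hind hIdeg k hcase2 x0 I.card I le_rfl (subset_refl I)
    have hlen : k ≤ L.length := by
      by_contra hcon
      push_neg at hcon
      have h1 : L.length ≤ k - 1 := by omega
      have h2 : (k - 1) * L.length ≤ (k - 1) * (k - 1) := Nat.mul_le_mul_left _ h1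
      have h3 : (k - 1) ^ 2 = (k - 1) * (k - 1) := pow_two _
      omega
    have hmass : k ≤ massL (fun v => (G.neighborFinset v ∩ T).card) L :=
      le_trans hlen (massL_ge_length L 0 hD hCne)
    obtain ⟨S, hSne, hSe⟩ := hH k (by omega)
    refine ⟨S, hSne, ?_⟩
    rw [eCard_set_eq]
    exact hSe
end

section
/- Let m, n, p ≥ 1 be natural numbers and G a finite simple graph. Let A, B ⊆ V(G) be disjoint sets such that every u ∈ A has at least p neighbors in B. If |A| > (m−1)(n−1)^p, then (i) either there exist m pairwise distinct vertices u_1, …, u_m ∈ A and p pairwise distinct vertices v_1, …, v_p ∈ B with {u_i, v_j} an edge of G for every i ∈ {1,…,m} and j ∈ {1,…,p}, (ii) or there exist pairwise distinct vertices u_1, …, u_n ∈ A and pairwise distinct vertices v_1, …, v_n ∈ B such that for all i, j ∈ {1,…,n}, {u_i, v_j} is an edge of G if and only if i = j. -/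
open Finset

theorem bml_aux {V : Type*} [Fintype V] [DecidableEq V]
    (G : SimpleGraph V) [DecidableRel G.Adj]
    (m n : ℕ) (hn : 1 ≤ n) :
    ∀ p : ℕ, 1 ≤ p → ∀ A B : Finset V,
    (∀ u ∈ A, p ≤ (B.filter fun w => G.Adj u w).card) →
    (m - 1) * (n - 1) ^ p < A.card →
    (∃ S T : Finset V, S ⊆ A ∧ T ⊆ B ∧ S.card = m ∧ T.card = p ∧
       ∀ u ∈ S, ∀ v ∈ T, G.Adj u v) ∨
    (∃ u v : Fin n → V, Function.Injective u ∧ Function.Injective v ∧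
      (∀ i, u i ∈ A) ∧ (∀ i, v i ∈ B) ∧ ∀ i j, G.Adj (u i) (v j) ↔ i = j) := by
  intro p
  induction p with
  | zero => intro h; omega
  | succ q ih =>
    intro _ A B hnb hcard
    by_cases hcase : ∃ v ∈ B, (m - 1) * (n - 1) ^ q < (A.filter fun u => G.Adj u v).card
    · -- some vertex of B has many neighbors in A
      obtain ⟨v₀, hv₀B, hdeg⟩ := hcase
      rcases Nat.eq_zero_or_pos q with hq | hq
      · -- base case q = 0 : v₀ has ≥ m neighbors in A, giving K_{m,1}
        subst hq
        have hm' : m ≤ (A.filter fun u => G.Adj u v₀).card := by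
          simp only [pow_zero, mul_one] at hdeg; omega
        obtain ⟨S, hSsub, hScard⟩ := Finset.exists_subset_card_eq hm'
        left
        refine ⟨S, {v₀}, hSsub.trans (filter_subset _ _), ?_, hScard, by simp, ?_⟩
        · simp [hv₀B]
        · intro u hu v hv
          rw [mem_singleton] at hv
          subst hv
          exact (mem_filter.mp (hSsub hu)).2
      · -- recurse inside the neighborhood of v₀
        have hnb' : ∀ u ∈ A.filter (fun u => G.Adj u v₀),
            q ≤ ((B.erase v₀).filter fun w => G.Adj u w).card := by
          intro u hu
          have huA : u ∈ A := (mem_filter.mp hu).1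
          have h1 : q + 1 ≤ (B.filter fun w => G.Adj u w).card := hnb u huA
          have h2 : ((B.filter fun w => G.Adj u w).erase v₀)
              ⊆ (B.erase v₀).filter fun w => G.Adj u w := by
            intro w hw
            rw [mem_erase] at hw
            rw [mem_filter] at hw ⊢
            exact ⟨mem_erase.mpr ⟨hw.1, hw.2.1⟩, hw.2.2⟩
          have h3 := card_le_card h2
          have h4 := Finset.pred_card_le_card_erase
            (s := B.filter fun w => G.Adj u w) (a := v₀)
          omega
        rcases ih hq (A.filter (fun u => G.Adj u v₀)) (B.erase v₀) hnb' hdeg with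
          ⟨S, T', hS, hT', hScard, hT'card, hadj⟩ | hmatch
        · left
          have hv₀T' : v₀ ∉ T' := fun h => notMem_erase v₀ B (hT' h)
          refine ⟨S, insert v₀ T', hS.trans (filter_subset _ _), ?_, hScard, ?_, ?_⟩
          · intro w hw
            rcases mem_insert.mp hw with rfl | hw'
            · exact hv₀B
            · exact (erase_subset _ _) (hT' hw')
          · rw [card_insert_of_notMem hv₀T', hT'card]
          · intro u hu v hv
            rcases mem_insert.mp hv with rfl | hv'
            · exact (mem_filter.mp (hS hu)).2
            · exact hadj u hu v hv'
        · right
          obtain ⟨u, v, hui, hvi, huA, hvB, hiff⟩ := hmatch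
          exact ⟨u, v, hui, hvi, fun i => (filter_subset _ _) (huA i),
            fun i => (erase_subset _ _) (hvB i), hiff⟩
    · -- all B-degrees small: minimal cover gives an induced matching
      push_neg at hcase
      have hBcover : ∀ u ∈ A, ∃ v ∈ B, G.Adj u v := by
        intro u hu
        have h1 := hnb u hu
        have hpos : 0 < (B.filter fun w => G.Adj u w).card := by omega
        obtain ⟨v, hv⟩ := Finset.card_pos.mp hpos
        exact ⟨v, (mem_filter.mp hv).1, (mem_filter.mp hv).2⟩
      set C := B.powerset.filter (fun s => ∀ u ∈ A, ∃ v ∈ s, G.Adj u v) with hC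
      have hBC : B ∈ C := mem_filter.mpr ⟨mem_powerset_self B, hBcover⟩
      obtain ⟨Bs, hBsC, hmin⟩ := C.exists_min_image Finset.card ⟨B, hBC⟩
      have hBsB : Bs ⊆ B := mem_powerset.mp (mem_filter.mp hBsC).1
      have hBscov : ∀ u ∈ A, ∃ v ∈ Bs, G.Adj u v := (mem_filter.mp hBsC).2
      have hpriv : ∀ v, v ∈ Bs →
          ∃ u, u ∈ A ∧ G.Adj u v ∧ ∀ w ∈ Bs, G.Adj u w → w = v := by
        intro v hv
        by_contra hcon
        push_neg at hcon
        have hcov' : ∀ u ∈ A, ∃ w ∈ Bs.erase v, G.Adj u w := by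
          intro u hu
          obtain ⟨w, hwBs, hadj⟩ := hBscov u hu
          by_cases hwv : w = v
          · subst hwv
            obtain ⟨w', hw'Bs, hadj', hne⟩ := hcon u hu hadj
            exact ⟨w', mem_erase.mpr ⟨hne, hw'Bs⟩, hadj'⟩
          · exact ⟨w, mem_erase.mpr ⟨hwv, hwBs⟩, hadj⟩
        have hmem : Bs.erase v ∈ C :=
          mem_filter.mpr ⟨mem_powerset.mpr ((erase_subset _ _).trans hBsB), hcov'⟩
        have hlt : (Bs.erase v).card < Bs.card := card_erase_lt_of_mem hv
        have := hmin _ hmem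
        omega
      have hsub : A ⊆ Bs.biUnion (fun v => A.filter fun u => G.Adj u v) := by
        intro u hu
        obtain ⟨v, hvBs, hadj⟩ := hBscov u hu
        exact mem_biUnion.mpr ⟨v, hvBs, mem_filter.mpr ⟨hu, hadj⟩⟩
      have hA_le : A.card ≤ Bs.card * ((m - 1) * (n - 1) ^ q) := by
        calc A.card ≤ (Bs.biUnion (fun v => A.filter fun u => G.Adj u v)).card :=
              card_le_card hsub
          _ ≤ ∑ v ∈ Bs, (A.filter fun u => G.Adj u v).card := card_biUnion_le
          _ ≤ ∑ _v ∈ Bs, ((m - 1) * (n - 1) ^ q) :=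
              Finset.sum_le_sum (fun v hv => hcase v (hBsB hv))
          _ = Bs.card * ((m - 1) * (n - 1) ^ q) := by
              rw [Finset.sum_const, smul_eq_mul]
      have hpow : (m - 1) * (n - 1) ^ (q + 1) = (n - 1) * ((m - 1) * (n - 1) ^ q) := by
        rw [pow_succ]; ring
      have hn_le : n ≤ Bs.card := by
        by_contra hcon
        push_neg at hcon
        have h1 : A.card ≤ (n - 1) * ((m - 1) * (n - 1) ^ q) :=
          le_trans hA_le (Nat.mul_le_mul_right _ (by omega))
        omega
      obtain ⟨T, hTBs, hTcard⟩ := Finset.exists_subset_card_eq hn_le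
      choose f hfA hfadj hfpriv using hpriv
      right
      have vmem : ∀ i : Fin n, (((Finset.equivFinOfCardEq hTcard).symm i : V)) ∈ Bs :=
        fun i => hTBs ((Finset.equivFinOfCardEq hTcard).symm i).2
      refine ⟨fun i => f ((Finset.equivFinOfCardEq hTcard).symm i : V) (vmem i),
        fun i => ((Finset.equivFinOfCardEq hTcard).symm i : V), ?_, ?_, ?_, ?_, ?_⟩
      · intro i j hij
        dsimp only at hij
        have h1 : G.Adj (f ((Finset.equivFinOfCardEq hTcard).symm i : V) (vmem i))
            ((Finset.equivFinOfCardEq hTcard).symm j : V) := by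
          rw [hij]; exact hfadj _ (vmem j)
        have h2 := hfpriv _ (vmem i) _ (vmem j) h1
        have h3 : ((Finset.equivFinOfCardEq hTcard).symm j) = ((Finset.equivFinOfCardEq hTcard).symm i) :=
          Subtype.ext h2
        exact (((Finset.equivFinOfCardEq hTcard).symm).injective h3).symm
      · intro i j hij
        exact ((Finset.equivFinOfCardEq hTcard).symm).injective (Subtype.ext hij)
      · intro i; exact hfA _ (vmem i)
      · intro i; exact hBsB (vmem i)
      · intro i j
        constructor
        · intro hadj
          have h2 := hfpriv _ (vmem i) _ (vmem j) hadj
          exact (((Finset.equivFinOfCardEq hTcard).symm).injective (Subtype.ext h2)).symm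
        · rintro rfl
          exact hfadj _ (vmem i)

theorem bipartite_matching_lemma_general {V : Type*} [Fintype V] [DecidableEq V]
    (G : SimpleGraph V) [DecidableRel G.Adj]
    (m n p : ℕ) (hm : 1 ≤ m) (hn : 1 ≤ n) (hp : 1 ≤ p)
    (A B : Finset V) (hdisj : Disjoint A B)
    (hnb : ∀ u ∈ A, p ≤ (B.filter fun w => G.Adj u w).card)
    (hcard : (m - 1) * (n - 1) ^ p < A.card) :
    (∃ u : Fin m → V, ∃ v : Fin p → V, Function.Injective u ∧ Function.Injective v ∧
      (∀ i, u i ∈ A) ∧ (∀ j, v j ∈ B) ∧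
      ∀ (i : Fin m) (j : Fin p), G.Adj (u i) (v j)) ∨
    (∃ u : Fin n → V, ∃ v : Fin n → V, Function.Injective u ∧ Function.Injective v ∧
      (∀ i, u i ∈ A) ∧ (∀ i, v i ∈ B) ∧
      ∀ i j : Fin n, G.Adj (u i) (v j) ↔ i = j) := by
  rcases bml_aux G m n hn p hp A B hnb hcard with
    ⟨S, T, hSA, hTB, hScard, hTcard, hadj⟩ | hmatch
  · left
    refine ⟨fun i => ((Finset.equivFinOfCardEq hScard).symm i : V),
      fun j => ((Finset.equivFinOfCardEq hTcard).symm j : V), ?_, ?_, ?_, ?_, ?_⟩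
    · intro i j hij
      exact ((Finset.equivFinOfCardEq hScard).symm).injective (Subtype.ext hij)
    · intro i j hij
      exact ((Finset.equivFinOfCardEq hTcard).symm).injective (Subtype.ext hij)
    · intro i; exact hSA ((Finset.equivFinOfCardEq hScard).symm i).2
    · intro j; exact hTB ((Finset.equivFinOfCardEq hTcard).symm j).2
    · intro i j
      exact hadj _ ((Finset.equivFinOfCardEq hScard).symm i).2 _ ((Finset.equivFinOfCardEq hTcard).symm j).2
  · right; exact hmatch
end

section
/- Let G be a finite connected simple graph and let S ⊆ V(G) be a dominating set of G. Then for all vertices u, v of G, the distance d(u, v) in G is at most 3·|S| − 1; that is, the diameter of G is bounded by 3·|S| − 1. -/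
open SimpleGraph

private lemma walk_getVert_le {V : Type*} {G : SimpleGraph V} {u v : V}
    (p : G.Walk u v) : ∀ i j : ℕ, i ≤ j →
    ∃ q : G.Walk (p.getVert i) (p.getVert j), q.length ≤ j - i := by
  induction p with
  | nil =>
    intro i j _
    exact ⟨(SimpleGraph.Walk.nil).copy rfl rfl, by simp⟩
  | @cons a b c h q ih =>
    intro i j hij
    match i, j with
    | 0, 0 => exact ⟨(SimpleGraph.Walk.nil).copy rfl rfl, by simp⟩
    | 0, (k+1) =>
      obtain ⟨w, hw⟩ := ih 0 k (Nat.zero_le k)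
      exact ⟨SimpleGraph.Walk.cons h (w.copy (q.getVert_zero) rfl), Nat.succ_le_succ ((SimpleGraph.Walk.length_copy _ _ _).le.trans hw)⟩
    | (i+1), (j+1) =>
      rw [SimpleGraph.Walk.getVert_cons_succ, SimpleGraph.Walk.getVert_cons_succ]
      obtain ⟨w, hw⟩ := ih i j (by omega)
      exact ⟨w, by omega⟩

private lemma dist_getVert_le {V : Type*} {G : SimpleGraph V} {u v : V}
    (p : G.Walk u v) (i j : ℕ) (hij : i ≤ j) :
    G.dist (p.getVert i) (p.getVert j) ≤ j - i := by
  obtain ⟨q, hq⟩ := walk_getVert_le p i j hij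
  exact le_trans (SimpleGraph.dist_le q) hq

theorem dominating_set_diameter {V : Type*} [Fintype V] (G : SimpleGraph V)
    (hconn : G.Connected) (S : Finset V)
    (hdom : ∀ v : V, v ∈ S ∨ ∃ u ∈ S, G.Adj u v) :
    ∀ u v : V, G.dist u v ≤ 3 * S.card - 1 := by
  intro u v
  obtain ⟨p, hp⟩ := hconn.exists_walk_length_eq_dist u v
  set d := G.dist u v with hd
  -- on a geodesic, distances are exact
  have hexact : ∀ i j : ℕ, i ≤ j → j ≤ d →
      G.dist (p.getVert i) (p.getVert j) = j - i := by
    intro i j hij hj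
    have hle := dist_getVert_le p i j hij
    have h1 : G.dist u (p.getVert i) ≤ i := by
      have := dist_getVert_le p 0 i (Nat.zero_le i)
      rwa [SimpleGraph.Walk.getVert_zero, Nat.sub_zero] at this
    have h2 : G.dist (p.getVert j) v ≤ d - j := by
      have := dist_getVert_le p j p.length (by omega)
      rwa [SimpleGraph.Walk.getVert_length, hp] at this
    have htri : d ≤ G.dist u (p.getVert i) + G.dist (p.getVert i) (p.getVert j)
        + G.dist (p.getVert j) v := by
      calc d ≤ G.dist u (p.getVert j) + G.dist (p.getVert j) v := hconn.dist_triangle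
        _ ≤ (G.dist u (p.getVert i) + G.dist (p.getVert i) (p.getVert j))
            + G.dist (p.getVert j) v := by
            have : G.dist u (p.getVert j) ≤ G.dist u (p.getVert i)
                + G.dist (p.getVert i) (p.getVert j) := hconn.dist_triangle
            omega
    omega
  -- each vertex has a dominator at distance ≤ 1
  have hdom' : ∀ w : V, ∃ s ∈ S, G.dist s w ≤ 1 := by
    intro w
    rcases hdom w with hw | ⟨s, hs, hadj⟩
    · exact ⟨w, hw, by simp [SimpleGraph.dist_self]⟩
    · exact ⟨s, hs, SimpleGraph.dist_le hadj.toWalk⟩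
  set k := d / 3 with hk
  have hkd : 3 * k ≤ d := by have := Nat.mul_div_le d 3; omega
  -- pick dominators of getVert (3*m) for m ≤ k
  choose f hfS hfd using fun m : ℕ => hdom' (p.getVert (3 * m))
  have key : ∀ a b : ℕ, a < b → b ≤ k → f a ≠ f b := by
    intro a b hlt hbk hab
    have hdab : G.dist (p.getVert (3 * a)) (p.getVert (3 * b)) = 3 * b - 3 * a :=
      hexact (3 * a) (3 * b) (by omega) (by omega)
    have h2 : G.dist (p.getVert (3 * a)) (p.getVert (3 * b)) ≤ 2 := by
      calc G.dist (p.getVert (3 * a)) (p.getVert (3 * b))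
          ≤ G.dist (p.getVert (3 * a)) (f a) + G.dist (f a) (p.getVert (3 * b)) :=
            hconn.dist_triangle
        _ ≤ 1 + 1 := by
            have h3 := hfd a
            have h4 := hfd b
            rw [← hab] at h4
            rw [G.dist_comm] at h3
            omega
        _ = 2 := rfl
    omega
  have hinj : Set.InjOn f (Finset.range (k + 1)) := by
    intro a ha b hb hab
    simp only [Finset.coe_range, Set.mem_Iio] at ha hb
    rcases lt_trichotomy a b with hlt | heq | hlt
    · exact absurd hab (key a b hlt (by omega))
    · exact heq
    · exact absurd hab.symm (key b a hlt (by omega))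
  have hcard : k + 1 ≤ S.card := by
    have := Finset.card_le_card_of_injOn f (fun m hm => hfS m) hinj
    simpa using this
  have : d % 3 < 3 := Nat.mod_lt _ (by norm_num)
  have : 3 * k + d % 3 = d := Nat.div_add_mod d 3 ▸ by omega
  omega
end

section
/- Let d ∈ ℕ, k ≥ 1 and let G be a d-degree-extreme finite simple graph (every vertex v satisfies deg(v) ≤ d or deg(v) ≥ |V(G)| − 1 − d). Define a new simple graph G' on the vertex set V(G) by declaring distinct vertices u, v adjacent in G' if and only if either ({u,v} is an edge of G and at least one of u, v has G-degree ≤ d), or ({u,v} is not an edge of G and both u and v have G-degree > d). If the number of vertices v of G with 1 ≤ deg(v) ≤ d is at most (d+1)·(k−1)², then every vertex of G' has degree at most d + (d+1)·(k−1)² in G'. -/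
theorem degree_extreme_structure_bounded_degree {V : Type*} [Fintype V]
    (G : SimpleGraph V) [DecidableRel G.Adj] (d k : ℕ) (hk : 1 ≤ k)
    (hextreme : ∀ v : V, G.degree v ≤ d ∨ Fintype.card V - 1 - d ≤ G.degree v)
    (G' : SimpleGraph V) [DecidableRel G'.Adj]
    (hG' : ∀ u v : V, G'.Adj u v ↔ (u ≠ v ∧
      ((G.Adj u v ∧ (G.degree u ≤ d ∨ G.degree v ≤ d)) ∨
       (¬ G.Adj u v ∧ d < G.degree u ∧ d < G.degree v))))
    (hfew : (Finset.univ.filter fun v : V => 1 ≤ G.degree v ∧ G.degree v ≤ d).card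
      ≤ (d + 1) * (k - 1) ^ 2) :
    ∀ v : V, G'.degree v ≤ d + (d + 1) * (k - 1) ^ 2 := by
  classical
  intro v
  have hdeg' : (G'.neighborFinset v).card = G'.degree v :=
    G'.card_neighborFinset_eq_degree v
  by_cases hv : G.degree v ≤ d
  · have h1 : (G'.neighborFinset v).card ≤ (G.neighborFinset v).card := by
      apply Finset.card_le_card
      intro u hu
      simp only [SimpleGraph.mem_neighborFinset] at *
      rcases (hG' v u).1 hu with ⟨hne, h | h⟩
      · exact h.1
      · exact absurd hv (not_le.2 h.2.1)
    rw [SimpleGraph.card_neighborFinset_eq_degree, SimpleGraph.card_neighborFinset_eq_degree] at h1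
    omega
  · push_neg at hv
    have hsub : G'.neighborFinset v ⊆
        (Finset.univ.filter fun u : V => 1 ≤ G.degree u ∧ G.degree u ≤ d) ∪
        (Finset.univ.filter fun u : V => u ≠ v ∧ ¬ G.Adj v u) := by
      intro u hu
      rw [SimpleGraph.mem_neighborFinset] at hu
      rcases (hG' v u).1 hu with ⟨hne, ⟨hadj, hd⟩ | ⟨hnadj, _, _⟩⟩
      · apply Finset.mem_union_left
        simp only [Finset.mem_filter, Finset.mem_univ, true_and]
        refine ⟨?_, hd.resolve_left (by omega)⟩
        have hpos : 0 < G.degree u :=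
          (G.degree_pos_iff_exists_adj u).2 ⟨v, hadj.symm⟩
        omega
      · apply Finset.mem_union_right
        simp only [Finset.mem_filter, Finset.mem_univ, true_and]
        exact ⟨hne.symm, hnadj⟩
    have hBeq : (Finset.univ.filter fun u : V => ¬(u ≠ v ∧ ¬ G.Adj v u))
        = insert v (G.neighborFinset v) := by
      ext u
      simp only [Finset.mem_filter, Finset.mem_univ, true_and, Finset.mem_insert,
        SimpleGraph.mem_neighborFinset, not_and_or, not_not, ne_eq]
    have hvnot : v ∉ G.neighborFinset v := by
      simp [SimpleGraph.mem_neighborFinset]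
    have hBcard : (Finset.univ.filter fun u : V => u ≠ v ∧ ¬ G.Adj v u).card
        + (G.degree v + 1) = Fintype.card V := by
      have h2 := Finset.card_filter_add_card_filter_not
        (s := (Finset.univ : Finset V)) (p := fun u : V => u ≠ v ∧ ¬ G.Adj v u)
      rw [hBeq, Finset.card_insert_of_notMem hvnot,
        SimpleGraph.card_neighborFinset_eq_degree] at h2
      simpa [Finset.card_univ, add_comm] using h2
    have hdeg : Fintype.card V - 1 - d ≤ G.degree v := (hextreme v).resolve_left (by omega)
    have hB : (Finset.univ.filter fun u : V => u ≠ v ∧ ¬ G.Adj v u).card ≤ d := by omega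
    have := Finset.card_le_card hsub
    have hun := Finset.card_union_le
      (Finset.univ.filter fun u : V => 1 ≤ G.degree u ∧ G.degree u ≤ d)
      (Finset.univ.filter fun u : V => u ≠ v ∧ ¬ G.Adj v u)
    omega
end

section
/- Let k ≥ 1 and let G be a finite simple graph. Define the simple graph H as follows: V(H) consists of the pairs (v, i) for v ∈ V(G) and i ∈ {1, …, k}, together with k−1 additional fresh vertices e_1, …, e_{k−1}; two vertices (u, i) and (v, i) with u ≠ v are adjacent in H; for i < j, (u, i) and (v, j) are adjacent in H if and only if u = v or {u, v} is an edge of G; and e_i is adjacent in H exactly to all vertices (v, j) with j = i or j = i+1. Define the blocks V_{2i−1} = { (v, i) : v ∈ V(G) } for i ∈ {1,…,k} and V_{2i} = {e_i} for i ∈ {1,…,k−1}. If H' is an induced subgraph of H without isolated vertices having exactly 2k−2 edges such that V(H') ∩ V_i ≠ ∅ for every i ∈ {1, …, 2k−1}, then the set { v ∈ V(G) : (v, i) ∈ V(H') for some i } is an independent set of size k in G. -/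
theorem reduction_claim {V : Type*} [Fintype V] [DecidableEq V] (G : SimpleGraph V)
    (k : ℕ) (hk : 1 ≤ k)
    (H : SimpleGraph ((V × Fin k) ⊕ Fin (k - 1)))
    (hH1 : ∀ (u v : V) (i j : Fin k),
      H.Adj (Sum.inl (u, i)) (Sum.inl (v, j)) ↔
        ((i = j ∧ u ≠ v) ∨ (i ≠ j ∧ (u = v ∨ G.Adj u v))))
    (hH2 : ∀ (v : V) (j : Fin k) (e : Fin (k - 1)),
      H.Adj (Sum.inl (v, j)) (Sum.inr e) ↔ ((j : ℕ) = (e : ℕ) ∨ (j : ℕ) = (e : ℕ) + 1))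
    (hH3 : ∀ e e' : Fin (k - 1), ¬ H.Adj (Sum.inr e) (Sum.inr e'))
    (SH : Finset ((V × Fin k) ⊕ Fin (k - 1)))
    (hne : SH.Nonempty)
    (hnoiso : ∀ x ∈ SH, ∃ y ∈ SH, H.Adj x y)
    (hedges : {e ∈ H.edgeSet | ∀ x ∈ e, x ∈ SH}.ncard = 2 * k - 2)
    (hblocksOdd : ∀ i : Fin k, ∃ v : V, Sum.inl (v, i) ∈ SH)
    (hblocksEven : ∀ i : Fin (k - 1), Sum.inr i ∈ SH) :
    (Finset.univ.filter fun v : V => ∃ i : Fin k, Sum.inl (v, i) ∈ SH).card = k ∧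
    ∀ u ∈ (Finset.univ.filter fun v : V => ∃ i : Fin k, Sum.inl (v, i) ∈ SH),
      ∀ w ∈ (Finset.univ.filter fun v : V => ∃ i : Fin k, Sum.inl (v, i) ∈ SH),
        u ≠ w → ¬ G.Adj u w := by
  classical
  have hfin : {e ∈ H.edgeSet | ∀ x ∈ e, x ∈ SH}.Finite := Set.toFinite _
  set ES := hfin.toFinset with hESdef
  have hmemES : ∀ e, e ∈ ES ↔ e ∈ H.edgeSet ∧ ∀ x ∈ e, x ∈ SH := by
    intro e; rw [hESdef, Set.Finite.mem_toFinset]; exact Iff.rfl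
  have hEScard : ES.card = 2 * k - 2 := by
    rw [← hedges]; exact (Set.ncard_eq_toFinset_card _ hfin).symm
  set F : Fin (k - 1) → Finset (Sym2 ((V × Fin k) ⊕ Fin (k - 1))) :=
    fun i => ES.filter (fun e => Sum.inr i ∈ e) with hFdef
  -- disjointness
  have hdisj : ∀ i ∈ (Finset.univ : Finset (Fin (k - 1))), ∀ j ∈ Finset.univ,
      i ≠ j → Disjoint (F i) (F j) := by
    intro i _ j _ hij
    rw [Finset.disjoint_left]
    intro e hei hej
    have h1 := Finset.mem_filter.mp hei
    have h2 := Finset.mem_filter.mp hej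
    have hne' : (Sum.inr i : (V × Fin k) ⊕ Fin (k - 1)) ≠ Sum.inr j := by
      simpa using hij
    have heq : e = s(Sum.inr i, Sum.inr j) :=
      (Sym2.mem_and_mem_iff hne').mp ⟨h1.2, h2.2⟩
    have hadj : H.Adj (Sum.inr i) (Sum.inr j) := by
      have := (hmemES e).mp h1.1
      rw [heq] at this
      exact this.1
    exact hH3 i j hadj
  -- each F i has at least 2 elements
  have hge : ∀ i : Fin (k - 1), 2 ≤ (F i).card := by
    intro i
    have hik : (i : ℕ) < k - 1 := i.isLt
    have hi1 : (i : ℕ) < k := by omega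
    have hi2 : (i : ℕ) + 1 < k := by omega
    set iL : Fin k := ⟨(i : ℕ), hi1⟩ with hiL
    set iR : Fin k := ⟨(i : ℕ) + 1, hi2⟩ with hiR
    obtain ⟨v, hv⟩ := hblocksOdd iL
    obtain ⟨w, hw⟩ := hblocksOdd iR
    have he1 : s(Sum.inr i, Sum.inl (v, iL)) ∈ F i := by
      refine Finset.mem_filter.mpr ⟨(hmemES _).mpr ⟨?_, ?_⟩, ?_⟩
      · exact ((hH2 v iL i).mpr (Or.inl rfl)).symm
      · intro x hx
        rcases Sym2.mem_iff.mp hx with rfl | rfl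
        · exact hblocksEven i
        · exact hv
      · exact Sym2.mem_mk_left _ _
    have he2 : s(Sum.inr i, Sum.inl (w, iR)) ∈ F i := by
      refine Finset.mem_filter.mpr ⟨(hmemES _).mpr ⟨?_, ?_⟩, ?_⟩
      · exact ((hH2 w iR i).mpr (Or.inr rfl)).symm
      · intro x hx
        rcases Sym2.mem_iff.mp hx with rfl | rfl
        · exact hblocksEven i
        · exact hw
      · exact Sym2.mem_mk_left _ _
    have hne12 : s(Sum.inr i, Sum.inl (v, iL)) ≠
        (s(Sum.inr i, Sum.inl (w, iR)) : Sym2 ((V × Fin k) ⊕ Fin (k - 1))) := by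
      intro h
      have := (Sym2.congr_right).mp h
      have : iL = iR := by
        injection this with h'
        exact congrArg Prod.snd h'
      have : (i : ℕ) = (i : ℕ) + 1 := congrArg Fin.val this
      omega
    calc 2 = ({s(Sum.inr i, Sum.inl (v, iL)), s(Sum.inr i, Sum.inl (w, iR))} :
          Finset (Sym2 ((V × Fin k) ⊕ Fin (k - 1)))).card := (Finset.card_pair hne12).symm
      _ ≤ (F i).card := by
          apply Finset.card_le_card
          intro e he
          rcases Finset.mem_insert.mp he with rfl | he'
          · exact he1
          · rw [Finset.mem_singleton.mp he']; exact he2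
  -- union of the F i is all of ES
  have hsub : Finset.univ.biUnion F ⊆ ES := by
    intro e he
    obtain ⟨i, _, hi⟩ := Finset.mem_biUnion.mp he
    exact (Finset.mem_filter.mp hi).1
  have hcardU : (Finset.univ.biUnion F).card = ∑ i : Fin (k - 1), (F i).card :=
    Finset.card_biUnion hdisj
  have hgeU : 2 * (k - 1) ≤ (Finset.univ.biUnion F).card := by
    rw [hcardU]
    calc 2 * (k - 1) = ∑ _i : Fin (k - 1), 2 := by
          simp [Finset.sum_const, Finset.card_univ, mul_comm]
      _ ≤ ∑ i : Fin (k - 1), (F i).card := Finset.sum_le_sum (fun i _ => hge i)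
  have hEq : Finset.univ.biUnion F = ES := by
    apply Finset.eq_of_subset_of_card_le hsub
    rw [hEScard]
    omega
  -- no two inl vertices of SH are adjacent
  have hnoinl : ∀ p q : V × Fin k, Sum.inl p ∈ SH → Sum.inl q ∈ SH →
      ¬ H.Adj (Sum.inl p) (Sum.inl q) := by
    intro p q hp hq hadj
    have he : s(Sum.inl p, Sum.inl q) ∈ ES := by
      refine (hmemES _).mpr ⟨hadj, ?_⟩
      intro x hx
      rcases Sym2.mem_iff.mp hx with rfl | rfl
      · exact hp
      · exact hq
    rw [← hEq] at he
    obtain ⟨i, _, hi⟩ := Finset.mem_biUnion.mp he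
    have hmem : (Sum.inr i : (V × Fin k) ⊕ Fin (k - 1)) ∈ s(Sum.inl p, Sum.inl q) :=
      (Finset.mem_filter.mp hi).2
    rcases Sym2.mem_iff.mp hmem with h | h <;> cases h
  -- uniqueness per layer
  have huniq : ∀ (j : Fin k) (v v' : V), Sum.inl (v, j) ∈ SH → Sum.inl (v', j) ∈ SH →
      v = v' := by
    intro j v v' hv hv'
    by_contra hne'
    exact hnoinl _ _ hv hv' ((hH1 v v' j j).mpr (Or.inl ⟨rfl, hne'⟩))
  -- distinctness + independence across layers
  have hind : ∀ (i j : Fin k) (v w : V), i ≠ j → Sum.inl (v, i) ∈ SH →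
      Sum.inl (w, j) ∈ SH → v ≠ w ∧ ¬ G.Adj v w := by
    intro i j v w hij hv hw
    constructor
    · rintro rfl
      exact hnoinl _ _ hv hw ((hH1 v v i j).mpr (Or.inr ⟨hij, Or.inl rfl⟩))
    · intro hadj
      exact hnoinl _ _ hv hw ((hH1 v w i j).mpr (Or.inr ⟨hij, Or.inr hadj⟩))
  set vv : Fin k → V := fun i => (hblocksOdd i).choose with hvvdef
  have hvv : ∀ i, Sum.inl (vv i, i) ∈ SH := fun i => (hblocksOdd i).choose_spec
  have hinj : Function.Injective vv := by
    intro i j hij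
    by_contra hij'
    exact (hind i j (vv i) (vv j) hij' (hvv i) (hvv j)).1 hij
  have hSimg : (Finset.univ.filter fun v : V => ∃ i : Fin k, Sum.inl (v, i) ∈ SH) =
      Finset.image vv Finset.univ := by
    ext v
    simp only [Finset.mem_filter, Finset.mem_univ, true_and, Finset.mem_image]
    constructor
    · rintro ⟨i, hi⟩
      exact ⟨i, huniq i (vv i) v (hvv i) hi⟩
    · rintro ⟨i, rfl⟩
      exact ⟨i, hvv i⟩
  constructor
  · rw [hSimg, Finset.card_image_of_injective _ hinj, Finset.card_univ, Fintype.card_fin]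
  · intro u hu w hw huw
    obtain ⟨i, hi⟩ := (Finset.mem_filter.mp hu).2
    obtain ⟨j, hj⟩ := (Finset.mem_filter.mp hw).2
    have hij : i ≠ j := by
      rintro rfl
      exact huw (huniq i u w hi hj)
    exact (hind i j u w hij hi hj).2
end
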